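/- arXiv:1402.2876 — 9 statements merged into one kernel-verified Lean document; each statement's English description precedes it below -/
import Mathlib

section
/- For a continuous function F : ℝ → ℝ with suitable decay (e.g., F bounded and continuous on [0,∞)), and s > 0, the Laplace transform of t ↦ t·F(t²) satisfies ∫₀^∞ e^(−s·t) · t · F(t²) dt = (s / (4√π)) · ∫₀^∞ e^(−s²/(4u)) · u^(−3/2) · f(u) du, where f(u) = ∫₀^∞ e^(−u·z) F(z) dz is the Laplace transform of F. -/
open MeasureTheory Real
open Set


-- derivative facts
lemma hderiv_phi (c : ℝ) (y : ℝ) (hy : y ∈ Ioi (0:ℝ)) :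
    HasDerivWithinAt (fun y : ℝ => y - c / y) (1 + c / y ^ 2) (Ioi 0) y := by
  have hy0 : y ≠ 0 := ne_of_gt hy
  have h : HasDerivAt (fun y : ℝ => y - c / y) (1 - c * (-(y ^ 2)⁻¹)) y := by
    exact (hasDerivAt_id' y).sub ((hasDerivAt_inv hy0).const_mul c)
  have : 1 - c * (-(y ^ 2)⁻¹) = 1 + c / y ^ 2 := by
    field_simp
    ring
  exact (this ▸ h).hasDerivWithinAt

lemma inj_phi (c : ℝ) (hc : 0 < c) : InjOn (fun y : ℝ => y - c / y) (Ioi 0) := by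
  intro a ha b hb h
  simp only [mem_Ioi] at ha hb
  simp only at h
  have h' : (a - b) * (a * b + c) = 0 := by
    field_simp at h
    nlinarith [h]
  have : a * b + c > 0 := by positivity
  have := mul_eq_zero.1 h'
  rcases this with h1 | h2
  · linarith
  · linarith

lemma surj_phi (c : ℝ) (hc : 0 < c) : (fun y : ℝ => y - c / y) '' (Ioi 0) = univ := by
  apply eq_univ_of_forall
  intro w
  set r := Real.sqrt (w ^ 2 + 4 * c) with hr
  have hr2 : r ^ 2 = w ^ 2 + 4 * c := Real.sq_sqrt (by positivity)
  have hrw : |w| < r := by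
    have : Real.sqrt (w^2) < r := by
      apply Real.sqrt_lt_sqrt (by positivity); linarith
    simpa [Real.sqrt_sq_eq_abs] using this
  have hy : 0 < (w + r) / 2 := by
    have := abs_lt.1 hrw
    linarith [this.1]
  refine ⟨(w + r)/2, hy, ?_⟩
  have hne : w + r ≠ 0 := by
    intro h; rw [h] at hy; simp at hy
  field_simp
  nlinarith [hr2]

lemma hderiv_psi (c : ℝ) (y : ℝ) (hy : y ∈ Ioi (0:ℝ)) :
    HasDerivWithinAt (fun y : ℝ => c / y) (-c / y ^ 2) (Ioi 0) y := by
  have hy0 : y ≠ 0 := ne_of_gt hy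
  have h : HasDerivAt (fun y : ℝ => c / y) (c * (-(y ^ 2)⁻¹)) y := by
    simpa [div_eq_mul_inv] using (hasDerivAt_inv hy0).const_mul c
  have : c * (-(y ^ 2)⁻¹) = -c / y ^ 2 := by field_simp
  exact (this ▸ h).hasDerivWithinAt

lemma inj_psi (c : ℝ) (hc : 0 < c) : InjOn (fun y : ℝ => c / y) (Ioi 0) := by
  intro a ha b hb h
  simp only [mem_Ioi] at ha hb
  simp only at h
  field_simp at h
  rcases h with h | h
  · linarith

lemma surj_psi (c : ℝ) (hc : 0 < c) : (fun y : ℝ => c / y) '' (Ioi 0) = Ioi 0 := by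
  ext v
  constructor
  · rintro ⟨y, hy, rfl⟩
    exact div_pos hc hy
  · intro hv
    exact ⟨c / v, div_pos hc hv, by field_simp⟩

lemma gauss_integrable : Integrable (fun w : ℝ => Real.exp (-w ^ 2)) := by
  simpa using integrable_exp_neg_mul_sq (by norm_num : (0:ℝ) < 1)

lemma glasser_aux (c : ℝ) (hc : 0 < c) :
    (∫ y in Ioi (0:ℝ), (1 + c / y ^ 2) * Real.exp (-(y - c / y) ^ 2)) = Real.sqrt π := by
  have h := integral_image_eq_integral_abs_deriv_smul measurableSet_Ioi
    (hderiv_phi c) (inj_phi c hc) (fun w => Real.exp (-w ^ 2))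
  rw [surj_phi c hc] at h
  have hg : ∫ w : ℝ, Real.exp (-w ^ 2) = Real.sqrt π := by
    simpa using integral_gaussian 1
  rw [Measure.restrict_univ] at h
  rw [hg] at h
  rw [h]
  apply setIntegral_congr_fun measurableSet_Ioi
  intro y hy
  have hy0 : (0:ℝ) < y := hy
  have : |1 + c / y ^ 2| = 1 + c / y ^ 2 := abs_of_pos (by positivity)
  simp [this, smul_eq_mul]

lemma glasser_integrableOn_aux (c : ℝ) (hc : 0 < c) :
    IntegrableOn (fun y => (1 + c / y ^ 2) * Real.exp (-(y - c / y) ^ 2)) (Ioi 0) := by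
  have h := (integrableOn_image_iff_integrableOn_abs_deriv_smul measurableSet_Ioi
    (hderiv_phi c) (inj_phi c hc) (fun w => Real.exp (-w ^ 2))).mp
  rw [surj_phi c hc] at h
  have := h (gauss_integrable.integrableOn)
  apply this.congr_fun ?_ measurableSet_Ioi
  intro y hy
  have hy0 : (0:ℝ) < y := hy
  have : |1 + c / y ^ 2| = 1 + c / y ^ 2 := abs_of_pos (by positivity)
  simp [this, smul_eq_mul]

lemma contOn_e (c : ℝ) : ContinuousOn (fun y : ℝ => Real.exp (-(y - c / y) ^ 2)) (Ioi 0) := by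
  apply ContinuousOn.rexp
  apply ContinuousOn.neg
  apply ContinuousOn.pow
  exact continuousOn_id.sub (continuousOn_const.div continuousOn_id
    (fun y hy => ne_of_gt hy))

lemma glasser_integrableOn (c : ℝ) (hc : 0 < c) :
    IntegrableOn (fun y => Real.exp (-(y - c / y) ^ 2)) (Ioi 0) := by
  refine Integrable.mono (glasser_integrableOn_aux c hc)
    ((contOn_e c).aestronglyMeasurable measurableSet_Ioi) ?_
  filter_upwards [ae_restrict_mem measurableSet_Ioi] with y hy
  have hy0 : (0:ℝ) < y := hy
  have h1 : (0:ℝ) < Real.exp (-(y - c / y) ^ 2) := Real.exp_pos _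
  rw [Real.norm_eq_abs, Real.norm_eq_abs, abs_of_pos h1, abs_of_pos (by positivity)]
  nlinarith [div_pos hc (pow_pos hy0 2)]

lemma glasser_part2_integrableOn (c : ℝ) (hc : 0 < c) :
    IntegrableOn (fun y => (c / y ^ 2) * Real.exp (-(y - c / y) ^ 2)) (Ioi 0) := by
  have h := (glasser_integrableOn_aux c hc).sub (glasser_integrableOn c hc)
  refine Integrable.congr h ?_
  filter_upwards with y
  simp only [Pi.sub_apply]
  ring

lemma glasser_reflect (c : ℝ) (hc : 0 < c) :
    (∫ y in Ioi (0:ℝ), Real.exp (-(y - c / y) ^ 2))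
      = ∫ y in Ioi (0:ℝ), (c / y ^ 2) * Real.exp (-(y - c / y) ^ 2) := by
  have h := integral_image_eq_integral_abs_deriv_smul measurableSet_Ioi
    (hderiv_psi c) (inj_psi c hc) (fun y => Real.exp (-(y - c / y) ^ 2))
  rw [surj_psi c hc] at h
  rw [h]
  apply setIntegral_congr_fun measurableSet_Ioi
  intro y hy
  have hy0 : (0:ℝ) < y := hy
  have hy0' : y ≠ 0 := ne_of_gt hy0
  have habs : |(-c / y ^ 2)| = c / y ^ 2 := by
    rw [neg_div, abs_neg, abs_of_pos (by positivity)]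
  have hcy : c / (c / y) = y := by
    rw [div_div_eq_mul_div, mul_comm, mul_div_assoc, div_self (ne_of_gt hc), mul_one]
  have harg : c / y - c / (c / y) = -(y - c / y) := by
    rw [hcy]; ring
  simp only [smul_eq_mul, habs, harg, neg_sq]

lemma glasser (c : ℝ) (hc : 0 < c) :
    ∫ y in Ioi (0:ℝ), Real.exp (-(y - c / y) ^ 2) = Real.sqrt π / 2 := by
  have key := glasser_aux c hc
  have hsplit : (∫ y in Ioi (0:ℝ), (1 + c / y ^ 2) * Real.exp (-(y - c / y) ^ 2))
      = (∫ y in Ioi (0:ℝ), Real.exp (-(y - c / y) ^ 2))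
        + ∫ y in Ioi (0:ℝ), (c / y ^ 2) * Real.exp (-(y - c / y) ^ 2) := by
    rw [← integral_add (glasser_integrableOn c hc) (glasser_part2_integrableOn c hc)]
    apply setIntegral_congr_fun measurableSet_Ioi
    intro y _
    ring
  rw [hsplit, ← glasser_reflect c hc] at key
  linarith


lemma gaussB (a : ℝ) (ha : 0 < a) :
    ∫ y in Ioi (0:ℝ), Real.exp (-y ^ 2 - a ^ 2 / (4 * y ^ 2))
      = (Real.sqrt π / 2) * Real.exp (-a) := by
  have hc : 0 < a / 2 := by linarith
  have key := glasser (a/2) hc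
  have : ∀ y ∈ Ioi (0:ℝ), Real.exp (-y ^ 2 - a ^ 2 / (4 * y ^ 2))
      = Real.exp (-(y - (a/2) / y) ^ 2) * Real.exp (-a) := by
    intro y hy
    have hy0 : y ≠ 0 := ne_of_gt hy
    rw [← Real.exp_add]
    congr 1
    field_simp
    ring
  rw [setIntegral_congr_fun measurableSet_Ioi this, integral_mul_const, key]

lemma gaussB_integrableOn (a : ℝ) (ha : 0 < a) :
    IntegrableOn (fun y => Real.exp (-y ^ 2 - a ^ 2 / (4 * y ^ 2))) (Ioi 0) := by
  have hc : 0 < a / 2 := by linarith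
  have h := ((glasser_integrableOn (a/2) hc).mul_const (Real.exp (-a)))
  refine Integrable.congr h ?_
  filter_upwards [ae_restrict_mem measurableSet_Ioi] with y hy
  have hy0 : y ≠ 0 := ne_of_gt hy
  rw [← Real.exp_add]
  congr 1
  field_simp
  ring

lemma rpow_key {s y : ℝ} (hs : 0 < s) (hy : 0 < y) :
    (s ^ 2 / (4 * y ^ 2)) ^ (-(3:ℝ)/2) = 8 * y ^ 3 / s ^ 3 := by
  have ht : (0:ℝ) < s / (2 * y) := by positivity
  have hx : s ^ 2 / (4 * y ^ 2) = (s / (2 * y)) ^ (2:ℕ) := by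
    rw [div_pow]; ring_nf
  rw [hx, ← Real.rpow_natCast (s / (2*y)) 2, ← Real.rpow_mul (le_of_lt ht)]
  norm_num
  rw [div_pow, inv_div]
  congr 1
  ring

section
variable {s z : ℝ}

lemma hderiv_g (s : ℝ) (y : ℝ) (hy : y ∈ Ioi (0:ℝ)) :
    HasDerivWithinAt (fun y : ℝ => s ^ 2 / (4 * y ^ 2)) (-(s ^ 2) / (2 * y ^ 3)) (Ioi 0) y := by
  have hy0 : y ≠ 0 := ne_of_gt hy
  have h : HasDerivAt (fun y : ℝ => s ^ 2 / 4 * (y ^ 2)⁻¹)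
      (s ^ 2 / 4 * (-(↑2 * y ^ 1) / (y ^ 2) ^ 2)) y :=
    ((hasDerivAt_pow 2 y).inv (pow_ne_zero _ hy0)).const_mul _
  have hfun : (fun y : ℝ => s ^ 2 / 4 * (y ^ 2)⁻¹) = fun y : ℝ => s ^ 2 / (4 * y ^ 2) := by
    funext t
    rw [← div_eq_mul_inv, div_div]
  rw [hfun] at h
  have heq : s ^ 2 / 4 * (-(↑2 * y ^ 1) / (y ^ 2) ^ 2) = -(s ^ 2) / (2 * y ^ 3) := by
    field_simp
    ring
  exact (heq ▸ h).hasDerivWithinAt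

lemma inj_g (s : ℝ) (hs : 0 < s) : InjOn (fun y : ℝ => s ^ 2 / (4 * y ^ 2)) (Ioi 0) := by
  intro a ha b hb h
  simp only [mem_Ioi] at ha hb
  simp only at h
  field_simp at h
  have hs2 : s ^ 2 ≠ 0 := pow_ne_zero _ (ne_of_gt hs)
  nlinarith [sq_nonneg (a - b), sq_nonneg (a + b), pow_pos hs 2]

lemma surj_g (s : ℝ) (hs : 0 < s) :
    (fun y : ℝ => s ^ 2 / (4 * y ^ 2)) '' (Ioi 0) = Ioi 0 := by
  ext v
  constructor
  · rintro ⟨y, hy, rfl⟩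
    have hy0 : (0:ℝ) < y := hy
    exact div_pos (pow_pos hs 2) (by positivity)
  · intro hv
    have hv0 : (0:ℝ) < v := hv
    have hsv : (0:ℝ) < Real.sqrt v := Real.sqrt_pos.2 hv0
    refine ⟨s / (2 * Real.sqrt v), mem_Ioi.2 (by positivity), ?_⟩
    simp only
    rw [div_pow]
    have h2 : (2 * Real.sqrt v) ^ 2 = 4 * v := by
      rw [mul_pow, Real.sq_sqrt (le_of_lt hv0)]; ring
    rw [h2]
    field_simp
end

lemma pointwise_g {s z : ℝ} (hs : 0 < s) (hz : 0 < z) (y : ℝ) (hy : y ∈ Ioi (0:ℝ)) :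
    |(-(s ^ 2) / (2 * y ^ 3))| •
      (Real.exp (-s ^ 2 / (4 * (s ^ 2 / (4 * y ^ 2)))) *
        (s ^ 2 / (4 * y ^ 2)) ^ (-(3:ℝ)/2) * Real.exp (-(s ^ 2 / (4 * y ^ 2)) * z))
    = (4 / s) * Real.exp (-y ^ 2 - (s * Real.sqrt z) ^ 2 / (4 * y ^ 2)) := by
  have hy0 : (0:ℝ) < y := hy
  have hy0' : y ≠ 0 := ne_of_gt hy0
  have hs' : s ≠ 0 := ne_of_gt hs
  have habs : |(-(s ^ 2) / (2 * y ^ 3))| = s ^ 2 / (2 * y ^ 3) := by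
    rw [neg_div, abs_neg, abs_of_pos (by positivity)]
  have e1 : -s ^ 2 / (4 * (s ^ 2 / (4 * y ^ 2))) = -y ^ 2 := by
    field_simp
  have e2 : -(s ^ 2 / (4 * y ^ 2)) * z = -((s * Real.sqrt z) ^ 2 / (4 * y ^ 2)) := by
    rw [mul_pow, Real.sq_sqrt (le_of_lt hz)]
    field_simp
  have e3 : -y ^ 2 - (s * Real.sqrt z) ^ 2 / (4 * y ^ 2)
      = (-y ^ 2) + (-((s * Real.sqrt z) ^ 2 / (4 * y ^ 2))) := by ring
  rw [habs, smul_eq_mul, e1, rpow_key hs hy0, e2, e3, Real.exp_add]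
  field_simp
  ring

lemma kernel_integral {s z : ℝ} (hs : 0 < s) (hz : 0 < z) :
    ∫ u in Ioi (0:ℝ), Real.exp (-s ^ 2 / (4 * u)) * u ^ (-(3:ℝ)/2) * Real.exp (-u * z)
      = 2 * Real.sqrt π / s * Real.exp (-(s * Real.sqrt z)) := by
  have h := integral_image_eq_integral_abs_deriv_smul measurableSet_Ioi (hderiv_g s)
    (inj_g s hs)
    (fun u => Real.exp (-s ^ 2 / (4 * u)) * u ^ (-(3:ℝ)/2) * Real.exp (-u * z))
  rw [surj_g s hs] at h
  rw [h, setIntegral_congr_fun measurableSet_Ioi (pointwise_g hs hz), integral_const_mul,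
    gaussB (s * Real.sqrt z) (by positivity)]
  ring

lemma kernel_integrableOn {s z : ℝ} (hs : 0 < s) (hz : 0 < z) :
    IntegrableOn (fun u => Real.exp (-s ^ 2 / (4 * u)) * u ^ (-(3:ℝ)/2) * Real.exp (-u * z))
      (Ioi 0) := by
  have h := (integrableOn_image_iff_integrableOn_abs_deriv_smul measurableSet_Ioi (hderiv_g s)
    (inj_g s hs)
    (fun u => Real.exp (-s ^ 2 / (4 * u)) * u ^ (-(3:ℝ)/2) * Real.exp (-u * z))).mpr
  rw [surj_g s hs] at h
  apply h
  have hint := (gaussB_integrableOn (s * Real.sqrt z) (by positivity)).const_mul (4 / s)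
  apply IntegrableOn.congr_fun hint ?_ measurableSet_Ioi
  intro y hy
  exact (pointwise_g hs hz y hy).symm

lemma hderiv_sq (t : ℝ) (ht : t ∈ Ioi (0:ℝ)) :
    HasDerivWithinAt (fun t : ℝ => t ^ 2) (2 * t) (Ioi 0) t := by
  simpa using (hasDerivAt_pow 2 t).hasDerivWithinAt

lemma inj_sq : InjOn (fun t : ℝ => t ^ 2) (Ioi 0) := by
  intro a ha b hb h
  simp only [mem_Ioi] at ha hb
  simp only at h
  nlinarith

lemma surj_sq : (fun t : ℝ => t ^ 2) '' (Ioi 0) = Ioi 0 := by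
  ext v
  constructor
  · rintro ⟨t, ht, rfl⟩
    have : (0:ℝ) < t := ht
    exact pow_pos this 2
  · intro hv
    have hv0 : (0:ℝ) < v := hv
    exact ⟨Real.sqrt v, mem_Ioi.2 (Real.sqrt_pos.2 hv0), Real.sq_sqrt (le_of_lt hv0)⟩

lemma lemmaA (F : ℝ → ℝ) (s : ℝ) (hs : 0 < s) :
    ∫ z in Ioi (0:ℝ), Real.exp (-(s * Real.sqrt z)) * F z
      = 2 * ∫ t in Ioi (0:ℝ), Real.exp (-s * t) * t * F (t ^ 2) := by
  have h := integral_image_eq_integral_abs_deriv_smul measurableSet_Ioi hderiv_sq inj_sq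
    (fun z => Real.exp (-(s * Real.sqrt z)) * F z)
  rw [surj_sq] at h
  rw [h, ← integral_const_mul]
  apply setIntegral_congr_fun measurableSet_Ioi
  intro t ht
  have ht0 : (0:ℝ) < t := ht
  simp only [smul_eq_mul]
  rw [abs_of_pos (by linarith : (0:ℝ) < 2 * t), Real.sqrt_sq (le_of_lt ht0)]
  ring_nf

lemma cube_le_exp {x : ℝ} (hx : 0 ≤ x) : x ^ 3 ≤ 27 * Real.exp x := by
  have h1 : x / 3 ≤ Real.exp (x / 3) := by linarith [Real.add_one_le_exp (x / 3)]
  have h2 : (x / 3) ^ 3 ≤ Real.exp (x / 3) ^ 3 := pow_le_pow_left₀ (by positivity) h1 3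
  have h3 : Real.exp (x / 3) ^ 3 = Real.exp x := by
    rw [← Real.exp_nat_mul]; ring_nf
  nlinarith [h2, h3]

lemma contOn_G (b : ℝ) :
    ContinuousOn (fun u : ℝ => Real.exp (-b / u) * u ^ (-(3:ℝ)/2) / u) (Ioi 0) := by
  apply ContinuousOn.div
  · apply ContinuousOn.mul
    · exact (continuousOn_const.div continuousOn_id (fun u hu => ne_of_gt hu)).rexp
    · exact continuousOn_id.rpow_const (fun u hu => Or.inl (ne_of_gt hu))
  · exact continuousOn_id
  · exact fun u hu => ne_of_gt hu

lemma G_integrableOn (b : ℝ) (hb : 0 < b) :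
    IntegrableOn (fun u : ℝ => Real.exp (-b / u) * u ^ (-(3:ℝ)/2) / u) (Ioi 0) := by
  rw [← Ioc_union_Ioi_eq_Ioi (le_of_lt one_pos)]
  apply IntegrableOn.union
  · -- bounded on Ioc 0 1
    refine Measure.integrableOn_of_bounded (M := 27 / b ^ 3) measure_Ioc_lt_top.ne
      ((by fun_prop : Measurable fun u : ℝ =>
        Real.exp (-b / u) * u ^ (-(3:ℝ)/2) / u).aestronglyMeasurable) ?_
    filter_upwards [ae_restrict_mem measurableSet_Ioc] with u hu
    obtain ⟨hu0, hu1⟩ := hu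
    have hexp : Real.exp (-b / u) ≤ 27 * u ^ 3 / b ^ 3 := by
      have h := cube_le_exp (x := b / u) (le_of_lt (by positivity))
      have hepos : (0:ℝ) < Real.exp (b / u) := Real.exp_pos _
      rw [neg_div, Real.exp_neg, inv_le_iff_one_le_mul₀ hepos, div_mul_eq_mul_div,
        le_div_iff₀ (by positivity)]
      calc (1:ℝ) * b ^ 3 = (b / u) ^ 3 * u ^ 3 := by field_simp
        _ ≤ 27 * Real.exp (b / u) * u ^ 3 := by nlinarith [pow_pos hu0 3]
        _ = 27 * u ^ 3 * Real.exp (b / u) := by ring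
    have hpow : u ^ (3:ℕ) * u ^ (-(3:ℝ)/2) / u ≤ 1 := by
      rw [← Real.rpow_natCast u 3, div_eq_mul_inv, ← Real.rpow_neg_one u,
        ← Real.rpow_add hu0, ← Real.rpow_add hu0]
      norm_num
      exact Real.rpow_le_one (le_of_lt hu0) hu1 (by norm_num)
    have hG : Real.exp (-b / u) * u ^ (-(3:ℝ)/2) / u ≤ 27 / b ^ 3 := by
      have hrp : (0:ℝ) < u ^ (-(3:ℝ)/2) := Real.rpow_pos_of_pos hu0 _
      calc Real.exp (-b / u) * u ^ (-(3:ℝ)/2) / u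
          ≤ (27 * u ^ 3 / b ^ 3) * u ^ (-(3:ℝ)/2) / u := by gcongr
        _ = (27 / b ^ 3) * (u ^ (3:ℕ) * u ^ (-(3:ℝ)/2) / u) := by ring
        _ ≤ (27 / b ^ 3) * 1 := by
            apply mul_le_mul_of_nonneg_left hpow (by positivity)
        _ = 27 / b ^ 3 := by ring
    rw [Real.norm_eq_abs, abs_of_nonneg (by positivity)]
    exact hG
  · -- tail, dominated by u ^ (-5/2)
    refine Integrable.mono (g := fun u : ℝ => u ^ (-(5:ℝ)/2))
      (integrableOn_Ioi_rpow_of_lt (by norm_num) one_pos)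
      (((contOn_G b).mono (Ioi_subset_Ioi (le_of_lt one_pos))).aestronglyMeasurable
        measurableSet_Ioi) ?_
    filter_upwards [ae_restrict_mem measurableSet_Ioi] with u hu
    have hu1 : (1:ℝ) < u := hu
    have hu0 : (0:ℝ) < u := lt_trans one_pos hu1
    have hrp : (0:ℝ) < u ^ (-(3:ℝ)/2) := Real.rpow_pos_of_pos hu0 _
    rw [Real.norm_eq_abs, Real.norm_eq_abs, abs_of_nonneg (by positivity),
      abs_of_nonneg (le_of_lt (Real.rpow_pos_of_pos hu0 _))]
    have hexp : Real.exp (-b / u) ≤ 1 := by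
      apply Real.exp_le_one_iff.2
      rw [neg_div]
      simp [le_of_lt (div_pos hb hu0)]
    calc Real.exp (-b / u) * u ^ (-(3:ℝ)/2) / u
        ≤ 1 * u ^ (-(3:ℝ)/2) / u := by gcongr
      _ = u ^ (-(3:ℝ)/2) * u⁻¹ := by ring
      _ = u ^ (-(5:ℝ)/2) := by
          rw [← Real.rpow_neg_one u, ← Real.rpow_add hu0]
          norm_num

section main
variable {F : ℝ → ℝ} {M s : ℝ}

lemma slice_int (hF : Continuous F) (hFb : ∀ t ≥ (0:ℝ), |F t| ≤ M)
    {u : ℝ} (hu : 0 < u) :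
    Integrable (fun z => Real.exp (-u * z) * F z) (volume.restrict (Ioi 0)) := by
  have hM0 : 0 ≤ M := le_trans (abs_nonneg _) (hFb 0 le_rfl)
  refine Integrable.mono ((exp_neg_integrableOn_Ioi 0 hu).const_mul M)
    (((Real.continuous_exp.comp (continuous_const.mul continuous_id)).mul
      hF).aestronglyMeasurable) ?_
  filter_upwards [ae_restrict_mem measurableSet_Ioi] with z hz
  have hz0 : (0:ℝ) < z := hz
  rw [Real.norm_eq_abs, Real.norm_eq_abs, abs_mul, abs_of_pos (Real.exp_pos _),
    abs_of_nonneg (by positivity : (0:ℝ) ≤ M * Real.exp (-u * z))]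
  calc Real.exp (-u * z) * |F z| ≤ Real.exp (-u * z) * M :=
        mul_le_mul_of_nonneg_left (hFb z (le_of_lt hz0)) (le_of_lt (Real.exp_pos _))
    _ = M * Real.exp (-u * z) := by ring

lemma exp_int_val {u : ℝ} (hu : 0 < u) :
    ∫ z in Ioi (0:ℝ), Real.exp (-(u * z)) = u⁻¹ := by
  have h := integral_comp_mul_left_Ioi (fun x => Real.exp (-x)) 0 hu
  simp only [mul_zero, integral_exp_neg_Ioi, neg_zero, Real.exp_zero, smul_eq_mul,
    mul_one] at h
  exact h

lemma Phi_aesm (hF : Continuous F) (s : ℝ) :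
    AEStronglyMeasurable (fun p : ℝ × ℝ =>
      Real.exp (-s ^ 2 / (4 * p.1)) * p.1 ^ (-(3:ℝ)/2) * (Real.exp (-p.1 * p.2) * F p.2))
      ((volume.restrict (Ioi 0)).prod (volume.restrict (Ioi 0))) := by
  apply Measurable.aestronglyMeasurable
  have hFm : Measurable F := hF.measurable
  fun_prop

lemma Phi_integrable (hF : Continuous F) (hFb : ∀ t ≥ (0:ℝ), |F t| ≤ M) (hs : 0 < s) :
    Integrable (Function.uncurry (fun u z =>
      Real.exp (-s ^ 2 / (4 * u)) * u ^ (-(3:ℝ)/2) * (Real.exp (-u * z) * F z)))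
      ((volume.restrict (Ioi 0)).prod (volume.restrict (Ioi 0))) := by
  have hM0 : 0 ≤ M := le_trans (abs_nonneg _) (hFb 0 le_rfl)
  have haesm := Phi_aesm hF s
  have huncurry : Function.uncurry (fun u z =>
      Real.exp (-s ^ 2 / (4 * u)) * u ^ (-(3:ℝ)/2) * (Real.exp (-u * z) * F z))
      = fun p : ℝ × ℝ =>
        Real.exp (-s ^ 2 / (4 * p.1)) * p.1 ^ (-(3:ℝ)/2) * (Real.exp (-p.1 * p.2) * F p.2) :=
    rfl
  rw [huncurry, integrable_prod_iff haesm]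
  constructor
  · filter_upwards [ae_restrict_mem measurableSet_Ioi] with u hu
    exact ((slice_int hF hFb hu).const_mul _)
  · have hGint := (G_integrableOn (s ^ 2 / 4) (by positivity)).const_mul M
    refine Integrable.mono hGint haesm.norm.integral_prod_right' ?_
    filter_upwards [ae_restrict_mem measurableSet_Ioi] with u hu
    have hu0 : (0:ℝ) < u := hu
    have hrp : (0:ℝ) < u ^ (-(3:ℝ)/2) := Real.rpow_pos_of_pos hu0 _
    have hc : (0:ℝ) < Real.exp (-s ^ 2 / (4 * u)) * u ^ (-(3:ℝ)/2) := by positivity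
    have hnonneg : 0 ≤ ∫ z in Ioi (0:ℝ),
        ‖Real.exp (-s ^ 2 / (4 * u)) * u ^ (-(3:ℝ)/2) * (Real.exp (-u * z) * F z)‖ :=
      integral_nonneg (fun z => norm_nonneg _)
    rw [Real.norm_eq_abs, abs_of_nonneg hnonneg]
    have hb : -(s ^ 2 / 4) / u = -s ^ 2 / (4 * u) := by
      rw [neg_div, neg_div, div_div]
    have hbound : (∫ z in Ioi (0:ℝ),
        ‖Real.exp (-s ^ 2 / (4 * u)) * u ^ (-(3:ℝ)/2) * (Real.exp (-u * z) * F z)‖)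
        ≤ M * (Real.exp (-s ^ 2 / (4 * u)) * u ^ (-(3:ℝ)/2) / u) := by
      have hle : ∀ z ∈ Ioi (0:ℝ),
          ‖Real.exp (-s ^ 2 / (4 * u)) * u ^ (-(3:ℝ)/2) * (Real.exp (-u * z) * F z)‖
          ≤ (M * (Real.exp (-s ^ 2 / (4 * u)) * u ^ (-(3:ℝ)/2))) * Real.exp (-(u * z)) := by
        intro z hz
        have hz0 : (0:ℝ) < z := hz
        rw [Real.norm_eq_abs, abs_mul, abs_mul, abs_mul, abs_of_pos (Real.exp_pos _),
          abs_of_pos (Real.exp_pos _), abs_of_pos hrp]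
        have : |F z| ≤ M := hFb z (le_of_lt hz0)
        calc Real.exp (-s ^ 2 / (4 * u)) * u ^ (-(3:ℝ)/2) * (Real.exp (-u * z) * |F z|)
            ≤ Real.exp (-s ^ 2 / (4 * u)) * u ^ (-(3:ℝ)/2) * (Real.exp (-u * z) * M) := by
              gcongr
          _ = (M * (Real.exp (-s ^ 2 / (4 * u)) * u ^ (-(3:ℝ)/2))) * Real.exp (-(u * z)) := by
              rw [neg_mul]; ring
      have hint2 : Integrable (fun z =>
          (M * (Real.exp (-s ^ 2 / (4 * u)) * u ^ (-(3:ℝ)/2))) * Real.exp (-(u * z)))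
          (volume.restrict (Ioi 0)) := by
        have := (exp_neg_integrableOn_Ioi 0 hu0).const_mul
          (M * (Real.exp (-s ^ 2 / (4 * u)) * u ^ (-(3:ℝ)/2)))
        refine this.congr (by filter_upwards with z; rw [neg_mul])
      calc (∫ z in Ioi (0:ℝ),
            ‖Real.exp (-s ^ 2 / (4 * u)) * u ^ (-(3:ℝ)/2) * (Real.exp (-u * z) * F z)‖)
          ≤ ∫ z in Ioi (0:ℝ),
            (M * (Real.exp (-s ^ 2 / (4 * u)) * u ^ (-(3:ℝ)/2))) * Real.exp (-(u * z)) := by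
            refine integral_mono_of_nonneg (by filter_upwards with z; exact norm_nonneg _)
              hint2 ?_
            filter_upwards [ae_restrict_mem measurableSet_Ioi] with z hz
            exact hle z hz
        _ = (M * (Real.exp (-s ^ 2 / (4 * u)) * u ^ (-(3:ℝ)/2))) * u⁻¹ := by
            rw [integral_const_mul, exp_int_val hu0]
        _ = M * (Real.exp (-s ^ 2 / (4 * u)) * u ^ (-(3:ℝ)/2) / u) := by
            rw [div_eq_mul_inv]; ring
    refine le_trans hbound ?_
    rw [Real.norm_eq_abs, hb, abs_of_nonneg (by positivity)]

end main

theorem stmt_0 (F : ℝ → ℝ) (hF : Continuous F) (M : ℝ)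
    (hFb : ∀ t ≥ (0:ℝ), |F t| ≤ M) (s : ℝ) (hs : 0 < s) :
    ∫ t in Set.Ioi (0:ℝ), Real.exp (-s * t) * t * F (t ^ 2)
      = (s / (4 * Real.sqrt π)) *
        ∫ u in Set.Ioi (0:ℝ), Real.exp (-s ^ 2 / (4 * u)) * u ^ (-(3:ℝ)/2) *
          (∫ z in Set.Ioi (0:ℝ), Real.exp (-u * z) * F z) := by
  have hpi : (0:ℝ) < Real.sqrt π := Real.sqrt_pos.2 Real.pi_pos
  have step1 : (∫ u in Ioi (0:ℝ), Real.exp (-s ^ 2 / (4 * u)) * u ^ (-(3:ℝ)/2) *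
          (∫ z in Ioi (0:ℝ), Real.exp (-u * z) * F z))
      = ∫ u in Ioi (0:ℝ), ∫ z in Ioi (0:ℝ),
          Real.exp (-s ^ 2 / (4 * u)) * u ^ (-(3:ℝ)/2) * (Real.exp (-u * z) * F z) := by
    apply setIntegral_congr_fun measurableSet_Ioi
    intro u _
    exact (integral_const_mul _ _).symm
  have step2 : (∫ u in Ioi (0:ℝ), ∫ z in Ioi (0:ℝ),
          Real.exp (-s ^ 2 / (4 * u)) * u ^ (-(3:ℝ)/2) * (Real.exp (-u * z) * F z))
      = ∫ z in Ioi (0:ℝ), ∫ u in Ioi (0:ℝ),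
          Real.exp (-s ^ 2 / (4 * u)) * u ^ (-(3:ℝ)/2) * (Real.exp (-u * z) * F z) :=
    integral_integral_swap (Phi_integrable hF hFb hs)
  have step3 : (∫ z in Ioi (0:ℝ), ∫ u in Ioi (0:ℝ),
          Real.exp (-s ^ 2 / (4 * u)) * u ^ (-(3:ℝ)/2) * (Real.exp (-u * z) * F z))
      = ∫ z in Ioi (0:ℝ), (2 * Real.sqrt π / s) *
          (Real.exp (-(s * Real.sqrt z)) * F z) := by
    apply setIntegral_congr_fun measurableSet_Ioi
    intro z hz
    beta_reduce
    have hz0 : (0:ℝ) < z := hz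
    have h1 : (∫ u in Ioi (0:ℝ),
        Real.exp (-s ^ 2 / (4 * u)) * u ^ (-(3:ℝ)/2) * (Real.exp (-u * z) * F z))
        = ∫ u in Ioi (0:ℝ),
          (Real.exp (-s ^ 2 / (4 * u)) * u ^ (-(3:ℝ)/2) * Real.exp (-u * z)) * F z := by
      apply setIntegral_congr_fun measurableSet_Ioi
      intro u _
      ring
    rw [h1, integral_mul_const, kernel_integral hs hz0]
    ring
  rw [step1, step2, step3, integral_const_mul, lemmaA F s hs]
  field_simp
  ring
end

section
/- For continuous F : ℝ → ℝ with compact support in [0,∞) (or suitable decay) and s > 1, ∫₀^∞ e^(−s t) · (∫₀^∞ (t^u · F(u)) / Γ(u+1) du) dt = f(ln s) / s, where f(w) = ∫₀^∞ e^(−w u) F(u) du. -/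
open MeasureTheory Real

theorem stmt_3 (F : ℝ → ℝ) (hF : Continuous F) (hsupp : HasCompactSupport F)
    (hpos : Function.support F ⊆ Set.Ici 0) (s : ℝ) (hs : 1 < s) :
    ∫ t in Set.Ioi (0:ℝ), Real.exp (-s * t) *
        (∫ u in Set.Ioi (0:ℝ), t ^ u * F u / Real.Gamma (u + 1))
      = (∫ u in Set.Ioi (0:ℝ), Real.exp (-(Real.log s) * u) * F u) / s := by
  have hs0 : (0:ℝ) < s := by linarith
  set μ := volume.restrict (Set.Ioi (0:ℝ)) with hμ
  set h : ℝ → ℝ → ℝ := fun t u => Real.exp (-s * t) * (t ^ u * F u / Real.Gamma (u + 1))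
    with hh
  -- bounds
  obtain ⟨R, hR0, hR⟩ := hsupp.exists_pos_le_norm
  obtain ⟨C, hC⟩ := hsupp.exists_bound_of_continuous hF
  have hC0 : 0 ≤ C := le_trans (norm_nonneg (F 0)) (hC 0)
  have hΓcont : ∀ u : ℝ, 0 ≤ u → ContinuousAt (fun u : ℝ => (Real.Gamma (u+1))⁻¹) u := by
    intro u hu
    have h1 : ContinuousAt Real.Gamma (u+1) := by
      refine (Real.differentiableAt_Gamma fun m => ?_).continuousAt
      intro hcon
      have h0 : (0:ℝ) ≤ (m:ℝ) := Nat.cast_nonneg m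
      linarith
    have h2 : Real.Gamma (u+1) ≠ 0 := (Real.Gamma_pos_of_pos (by linarith)).ne'
    exact (h1.comp (f := fun u : ℝ => u + 1) (continuousAt_id.add continuousAt_const)).inv₀ h2
  obtain ⟨D, hD⟩ : ∃ D, ∀ u ∈ Set.Icc (0:ℝ) R, ‖(Real.Gamma (u+1))⁻¹‖ ≤ D := by
    refine isCompact_Icc.exists_bound_of_continuousOn ?_
    exact fun u hu => (hΓcont u hu.1).continuousWithinAt
  have hD0 : 0 ≤ D := le_trans (norm_nonneg _) (hD 0 ⟨le_refl _, hR0.le⟩)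
  -- the dominating function
  set G : ℝ × ℝ → ℝ := fun p =>
    ((1 + p.1 ^ R) * Real.exp (-(s * p.1))) *
      Set.indicator (Set.Icc (0:ℝ) R) (fun _ => C * D) p.2 with hG
  have hGint : Integrable G (μ.prod μ) := by
    refine Integrable.mul_prod (L := ℝ) (f := fun t => (1 + t ^ R) * Real.exp (-(s * t)))
      (g := fun u => Set.indicator (Set.Icc (0:ℝ) R) (fun _ => C * D) u) ?_ ?_
    · have h1 : IntegrableOn (fun t : ℝ => Real.exp (-(s*t))) (Set.Ioi 0) := by
        simpa [neg_mul] using exp_neg_integrableOn_Ioi 0 hs0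
      have h2 : IntegrableOn (fun t : ℝ => t ^ R * Real.exp (-(s*t))) (Set.Ioi 0) := by
        have := integrableOn_rpow_mul_exp_neg_mul_rpow (by linarith : (-1:ℝ) < R)
          one_pos hs0
        refine this.congr_fun (fun x hx => ?_) measurableSet_Ioi
        dsimp only
        rw [Real.rpow_one, neg_mul]
      have h3 : IntegrableOn (fun t : ℝ => Real.exp (-(s*t)) + t ^ R * Real.exp (-(s*t)))
          (Set.Ioi 0) := h1.add h2
      refine h3.congr_fun (fun x hx => ?_) measurableSet_Ioi
      ring
    · rw [integrable_indicator_iff measurableSet_Icc]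
      refine (integrableOn_const_iff (C := C * D) enorm_ne_top).2 (Or.inr ?_)
      calc μ (Set.Icc 0 R) ≤ volume (Set.Icc (0:ℝ) R) := Measure.restrict_le_self _
        _ < ⊤ := by simp [Real.volume_Icc]
  have hmeas : AEStronglyMeasurable (Function.uncurry h) (μ.prod μ) := by
    rw [hμ, Measure.prod_restrict]
    refine ContinuousOn.aestronglyMeasurable ?_ (measurableSet_Ioi.prod measurableSet_Ioi)
    intro p hp
    obtain ⟨hp1, hp2⟩ := hp
    have c1 : ContinuousAt (fun p : ℝ × ℝ => Real.exp (-s * p.1)) p :=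
      (Real.continuous_exp.comp ((continuous_const.mul continuous_fst))).continuousAt
    have c2 : ContinuousAt (fun p : ℝ × ℝ => p.1 ^ p.2) p :=
      ContinuousAt.rpow continuousAt_fst continuousAt_snd (Or.inl (ne_of_gt hp1))
    have c3 : ContinuousAt (fun p : ℝ × ℝ => (Real.Gamma (p.2+1))⁻¹) p :=
      (hΓcont p.2 (le_of_lt hp2)).comp continuousAt_snd
    have c4 : ContinuousAt (fun p : ℝ × ℝ => F p.2) p :=
      (hF.comp continuous_snd).continuousAt
    have : ContinuousAt (Function.uncurry h) p := by
      simp only [hh, Function.uncurry, div_eq_mul_inv]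
      exact c1.mul ((c2.mul c4).mul c3)
    exact this.continuousWithinAt
  have hbound : ∀ᵐ p ∂(μ.prod μ), ‖Function.uncurry h p‖ ≤ G p := by
    rw [hμ, Measure.prod_restrict]
    filter_upwards [ae_restrict_mem (measurableSet_Ioi.prod measurableSet_Ioi)] with p hp
    obtain ⟨hp1, hp2⟩ := hp
    simp only [Set.mem_Ioi] at hp1 hp2
    have hGpos : 0 ≤ G p := by
      have : 0 ≤ Set.indicator (Set.Icc (0:ℝ) R) (fun _ => C * D) p.2 :=
        Set.indicator_nonneg (fun _ _ => mul_nonneg hC0 hD0) _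
      have h1 : (0:ℝ) ≤ 1 + p.1 ^ R := by positivity
      exact mul_nonneg (mul_nonneg h1 (Real.exp_pos _).le) this
    by_cases hFu : F p.2 = 0
    · simp [hh, Function.uncurry, hFu, hGpos]
    · have hu_mem : p.2 ∈ Set.Icc (0:ℝ) R := by
        constructor
        · exact hp2.le
        · by_contra hcon
          exact hFu (hR p.2 (by rw [Real.norm_eq_abs, abs_of_pos hp2]; linarith))
      have hrpow : p.1 ^ p.2 ≤ 1 + p.1 ^ R := by
        rcases le_or_gt p.1 1 with ht | ht
        · have : p.1 ^ p.2 ≤ 1 := Real.rpow_le_one hp1.le ht hp2.le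
          have : (0:ℝ) ≤ p.1 ^ R := (Real.rpow_pos_of_pos hp1 _).le
          linarith [Real.rpow_le_one hp1.le ht hp2.le]
        · have : p.1 ^ p.2 ≤ p.1 ^ R :=
            Real.rpow_le_rpow_of_exponent_le ht.le hu_mem.2
          linarith
      have hnorm : ‖Function.uncurry h p‖ =
          Real.exp (-s * p.1) * (p.1 ^ p.2 * ‖F p.2‖ * ‖(Real.Gamma (p.2+1))⁻¹‖) := by
        simp only [hh, Function.uncurry, div_eq_mul_inv, norm_mul, Real.norm_eq_abs,
          Real.abs_exp, abs_of_pos (Real.rpow_pos_of_pos hp1 p.2)]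
        try ring
      rw [hnorm, hG]
      simp only [Set.indicator_of_mem hu_mem]
      have hb : p.1 ^ p.2 * ‖F p.2‖ * ‖(Real.Gamma (p.2+1))⁻¹‖ ≤ (1 + p.1 ^ R) * (C * D) := by
        have h1 : ‖F p.2‖ ≤ C := hC p.2
        have h2 : ‖(Real.Gamma (p.2+1))⁻¹‖ ≤ D := hD p.2 hu_mem
        have h3 : (0:ℝ) ≤ p.1 ^ p.2 := (Real.rpow_pos_of_pos hp1 _).le
        calc p.1 ^ p.2 * ‖F p.2‖ * ‖(Real.Gamma (p.2+1))⁻¹‖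
            ≤ p.1 ^ p.2 * C * D := by
              exact mul_le_mul (mul_le_mul (le_refl _) h1 (norm_nonneg _) h3)
                h2 (norm_nonneg _) (by positivity)
          _ ≤ (1 + p.1 ^ R) * (C * D) := by nlinarith [mul_le_mul_of_nonneg_right hrpow (mul_nonneg hC0 hD0)]
      calc Real.exp (-s * p.1) * (p.1 ^ p.2 * ‖F p.2‖ * ‖(Real.Gamma (p.2+1))⁻¹‖)
          ≤ Real.exp (-s * p.1) * ((1 + p.1 ^ R) * (C * D)) := by
            exact mul_le_mul_of_nonneg_left hb (Real.exp_pos _).le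
        _ = (1 + p.1 ^ R) * Real.exp (-(s * p.1)) * (C * D) := by rw [neg_mul]; ring
  have key : Integrable (Function.uncurry h) (μ.prod μ) :=
    Integrable.mono' hGint hmeas hbound
  -- now the computation
  have step1 : ∀ t ∈ Set.Ioi (0:ℝ),
      Real.exp (-s * t) * (∫ u in Set.Ioi (0:ℝ), t ^ u * F u / Real.Gamma (u + 1))
        = ∫ u in Set.Ioi (0:ℝ), h t u := fun t _ => (integral_const_mul _ _).symm
  rw [setIntegral_congr_fun measurableSet_Ioi step1]
  have swap : ∫ t, ∫ u, h t u ∂μ ∂μ = ∫ u, ∫ t, h t u ∂μ ∂μ :=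
    integral_integral_swap key
  rw [show (∫ t in Set.Ioi (0:ℝ), ∫ u in Set.Ioi (0:ℝ), h t u) = ∫ t, ∫ u, h t u ∂μ ∂μ
    from rfl, swap]
  have step2 : ∀ u ∈ Set.Ioi (0:ℝ),
      (∫ t, h t u ∂μ) = Real.exp (-(Real.log s) * u) * F u / s := by
    intro u hu
    have hu0 : (0:ℝ) < u := hu
    have hΓpos : 0 < Real.Gamma (u+1) := Real.Gamma_pos_of_pos (by linarith)
    have e1 : ∀ t : ℝ, h t u = (F u / Real.Gamma (u+1)) * (t ^ (u+1-1) * Real.exp (-(s*t))) := by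
      intro t
      simp only [hh, add_sub_cancel_right, neg_mul]
      ring
    rw [show (∫ t, h t u ∂μ) = ∫ t in Set.Ioi (0:ℝ), h t u from rfl]
    simp_rw [e1]
    rw [integral_const_mul, Real.integral_rpow_mul_exp_neg_mul_Ioi (by linarith : (0:ℝ) < u+1) hs0]
    have e2 : ((1:ℝ)/s) ^ (u+1) = Real.exp (-(Real.log s) * u) / s := by
      rw [Real.rpow_def_of_pos (by positivity), one_div, Real.log_inv]
      rw [show -Real.log s * (u+1) = -Real.log s * u + -Real.log s by ring, Real.exp_add]
      rw [Real.exp_neg, Real.exp_log hs0]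
      ring
    rw [e2]
    field_simp
  rw [setIntegral_congr_fun measurableSet_Ioi step2, integral_div]
end

section
/- Generalized implicit log transform with parameter a: for a > 0, s > 1, and continuous compactly supported F on [0,∞), ∫₀^∞ e^(−s t) · (∫₀^∞ t^(a u) F(u) / Γ(a u + 1) du) dt = f(a · ln s) / s, where f(w) = ∫₀^∞ e^(−w u) F(u) du. -/
open MeasureTheory Real

theorem stmt_6 (F : ℝ → ℝ) (hF : Continuous F) (hsupp : HasCompactSupport F)
    (hpos : Function.support F ⊆ Set.Ici 0) (a s : ℝ) (ha : 0 < a) (hs : 1 < s) :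
    ∫ t in Set.Ioi (0:ℝ), Real.exp (-s * t) *
        (∫ u in Set.Ioi (0:ℝ), t ^ (a * u) * F u / Real.Gamma (a * u + 1))
      = (∫ u in Set.Ioi (0:ℝ), Real.exp (-(a * Real.log s) * u) * F u) / s := by
  have hs0 : (0:ℝ) < s := lt_trans one_pos hs
  -- M : support bound
  obtain ⟨M0, hM0⟩ := hsupp.isCompact.bddAbove
  set M : ℝ := max M0 1 with hMdef
  have hM1 : (1:ℝ) ≤ M := le_max_right _ _
  have hM0' : (0:ℝ) < M := lt_of_lt_of_le one_pos hM1
  have hsubset : Function.support F ⊆ Set.Icc 0 M := fun u hu =>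
    ⟨hpos hu, le_trans (hM0 (subset_tsupport F hu)) (le_max_left _ _)⟩
  have hFzero : ∀ u : ℝ, u ∉ Set.Icc 0 M → F u = 0 := by
    intro u hu
    by_contra h
    exact hu (hsubset h)
  -- B : norm bound
  obtain ⟨B0, hB0⟩ := hsupp.isCompact.exists_bound_of_continuousOn hF.continuousOn
  set B : ℝ := max B0 0 with hBdef
  have hB : ∀ u, |F u| ≤ B := by
    intro u
    by_cases h : u ∈ tsupport F
    · exact le_trans (hB0 u h) (le_max_left _ _)
    · rw [image_eq_zero_of_notMem_tsupport h]
      rw [abs_zero]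
      exact le_max_right _ _
  have hBpos : (0:ℝ) ≤ B := le_max_right _ _
  -- positivity of Gamma
  have hGpos : ∀ u : ℝ, 0 ≤ u → 0 < Real.Gamma (a * u + 1) := by
    intro u hu
    apply Real.Gamma_pos_of_pos
    nlinarith
  have hne : ∀ u : ℝ, 0 ≤ u → ∀ m : ℕ, a * u + 1 ≠ -(m : ℝ) := by
    intro u hu m h
    have : (0:ℝ) ≤ (m : ℝ) := Nat.cast_nonneg m
    nlinarith
  -- c : lower bound for Gamma on [0, M]
  have hGAt : ∀ u : ℝ, 0 ≤ u → ContinuousAt (fun x : ℝ => Real.Gamma (a * x + 1)) u := by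
    intro u hu
    have h2 : ContinuousAt (fun x : ℝ => a * x + 1) u := by fun_prop
    exact ContinuousAt.comp (f := fun x : ℝ => a * x + 1) (x := u)
      (Real.differentiableAt_Gamma (hne u hu)).continuousAt h2
  have hGcont : ContinuousOn (fun u => Real.Gamma (a * u + 1)) (Set.Icc 0 M) :=
    fun u hu => (hGAt u hu.1).continuousWithinAt
  obtain ⟨u0, hu0, hmin⟩ := isCompact_Icc.exists_isMinOn
    ⟨0, Set.left_mem_Icc.2 hM0'.le⟩ hGcont
  set c : ℝ := Real.Gamma (a * u0 + 1) with hcdef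
  have hc0 : 0 < c := hGpos u0 hu0.1
  have hc : ∀ u ∈ Set.Icc (0:ℝ) M, c ≤ Real.Gamma (a * u + 1) := fun u hu => hmin hu
  -- the double integrand
  set g : ℝ → ℝ → ℝ := fun t u => Real.exp (-s * t) * (t ^ (a * u) * F u / Real.Gamma (a * u + 1))
    with hgdef
  -- measurability
  have hmeas : AEStronglyMeasurable (Function.uncurry g)
      ((volume.restrict (Set.Ioi 0)).prod (volume.restrict (Set.Ioi 0))) := by
    rw [Measure.prod_restrict]
    apply ContinuousOn.aestronglyMeasurable _ (measurableSet_Ioi.prod measurableSet_Ioi)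
    apply ContinuousOn.mul
    · exact (Real.continuous_exp.comp (by fun_prop)).continuousOn
    apply ContinuousOn.div
    · apply ContinuousOn.mul
      · apply ContinuousOn.rpow
        · exact continuousOn_fst
        · exact (by fun_prop : Continuous fun p : ℝ × ℝ => a * p.2).continuousOn
        · intro p hp
          exact Or.inl (ne_of_gt hp.1)
      · exact (hF.comp continuous_snd).continuousOn
    · intro p hp
      have := (hGAt p.2 (le_of_lt hp.2)).comp
        (continuousAt_snd : ContinuousAt Prod.snd p)
      exact this.continuousWithinAt
    · intro p hp
      exact (hGpos p.2 (le_of_lt hp.2)).ne'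
  -- slice integrability
  have hslice : ∀ t : ℝ, 0 < t → Integrable (g t) (volume.restrict (Set.Ioi 0)) := by
    intro t ht
    have hsplit : Set.Ioi (0:ℝ) = Set.Ioc 0 M ∪ Set.Ioi M :=
      (Set.Ioc_union_Ioi_eq_Ioi hM0'.le).symm
    rw [← IntegrableOn, hsplit, integrableOn_union]
    constructor
    · apply (ContinuousOn.integrableOn_Icc ?_).mono_set Set.Ioc_subset_Icc_self
      apply ContinuousOn.mul continuousOn_const
      apply ContinuousOn.div
      · apply ContinuousOn.mul ?_ hF.continuousOn
        have heq : ∀ u ∈ Set.Icc (0:ℝ) M, t ^ (a * u) = Real.exp (Real.log t * (a * u)) :=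
          fun u _ => Real.rpow_def_of_pos ht _
        exact ContinuousOn.congr
          ((by fun_prop : Continuous fun u : ℝ => Real.exp (Real.log t * (a * u))).continuousOn)
          heq
      · exact hGcont
      · intro u hu; exact (hGpos u hu.1).ne'
    · refine (integrableOn_congr_fun ?_ measurableSet_Ioi).2 (integrableOn_zero)
      intro u hu
      have : F u = 0 := hFzero u (fun h => absurd h.2 (not_le.2 hu))
      simp [hgdef, this]
  -- pointwise bound on slices
  have hptbound : ∀ t : ℝ, 0 < t → ∀ u ∈ Set.Ioc (0:ℝ) M,
      ‖g t u‖ ≤ Real.exp (-s * t) * (1 + t ^ (a * M)) * (B / c) := by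
    intro t ht u hu
    have hΓ := hGpos u hu.1.le
    have hcΓ := hc u ⟨hu.1.le, hu.2⟩
    have htau : (0:ℝ) ≤ t ^ (a * u) := (Real.rpow_pos_of_pos ht _).le
    have h1 : t ^ (a * u) ≤ 1 + t ^ (a * M) := by
      have htM : (0:ℝ) ≤ t ^ (a * M) := (Real.rpow_pos_of_pos ht _).le
      rcases le_or_gt t 1 with h | h
      · have h3 : t ^ (a * u) ≤ 1 :=
          Real.rpow_le_one ht.le h (mul_nonneg ha.le hu.1.le)
        linarith
      · have h3 : t ^ (a * u) ≤ t ^ (a * M) :=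
          Real.rpow_le_rpow_of_exponent_le h.le
            (by nlinarith [hu.2] : a * u ≤ a * M)
        linarith
    have : ‖g t u‖ = Real.exp (-s * t) * (t ^ (a * u) * |F u| / Real.Gamma (a * u + 1)) := by
      rw [hgdef]
      simp only [norm_mul, Real.norm_eq_abs, abs_div, abs_mul,
        abs_of_pos (Real.exp_pos _), abs_of_nonneg htau, abs_of_pos hΓ]
    rw [this]
    have hstep : t ^ (a * u) * |F u| / Real.Gamma (a * u + 1) ≤ (1 + t ^ (a * M)) * (B / c) := by
      rw [div_le_iff₀ hΓ]
      have hFu : |F u| ≤ B := hB u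
      have h2 : t ^ (a * u) * |F u| ≤ (1 + t ^ (a * M)) * B := by
        apply mul_le_mul h1 hFu (abs_nonneg _) (by positivity)
      calc t ^ (a * u) * |F u| ≤ (1 + t ^ (a * M)) * B := h2
        _ = (1 + t ^ (a * M)) * (B / c) * c := by field_simp
        _ ≤ (1 + t ^ (a * M)) * (B / c) * Real.Gamma (a * u + 1) := by
            apply mul_le_mul_of_nonneg_left hcΓ (by positivity)
    calc Real.exp (-s * t) * (t ^ (a * u) * |F u| / Real.Gamma (a * u + 1))
        ≤ Real.exp (-s * t) * ((1 + t ^ (a * M)) * (B / c)) :=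
          mul_le_mul_of_nonneg_left hstep (Real.exp_pos _).le
      _ = Real.exp (-s * t) * (1 + t ^ (a * M)) * (B / c) := by ring
  -- integral bound on slices
  have hbound : ∀ t ∈ Set.Ioi (0:ℝ), (∫ u in Set.Ioi (0:ℝ), ‖g t u‖)
      ≤ Real.exp (-s * t) * (1 + t ^ (a * M)) * (B / c) * M := by
    intro t ht
    have ht0 : (0:ℝ) < t := ht
    set K := Real.exp (-s * t) * (1 + t ^ (a * M)) * (B / c) with hK
    have htM : (0:ℝ) ≤ t ^ (a * M) := (Real.rpow_pos_of_pos ht0 _).le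
    have hK0 : 0 ≤ K :=
      mul_nonneg (mul_nonneg (Real.exp_pos _).le (by linarith)) (div_nonneg hBpos hc0.le)
    have hmono : ∀ u ∈ Set.Ioi (0:ℝ), ‖g t u‖ ≤ Set.indicator (Set.Ioc 0 M) (fun _ => K) u := by
      intro u hu
      by_cases h : u ∈ Set.Ioc (0:ℝ) M
      · rw [Set.indicator_of_mem h]
        exact hptbound t ht u h
      · rw [Set.indicator_of_notMem h]
        have : F u = 0 := hFzero u (fun h' => h ⟨hu, h'.2⟩)
        simp [hgdef, this]
    have hint1 : IntegrableOn (fun u => ‖g t u‖) (Set.Ioi (0:ℝ)) := (hslice t ht).norm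
    have hint2 : IntegrableOn (Set.indicator (Set.Ioc (0:ℝ) M) (fun _ => K)) (Set.Ioi (0:ℝ)) := by
      have : Integrable (Set.indicator (Set.Ioc (0:ℝ) M) (fun _ => K))
          (volume.restrict (Set.Ioi 0)) := by
        rw [integrable_indicator_iff measurableSet_Ioc]
        exact integrableOn_const (ne_of_lt (lt_of_le_of_lt
          (Measure.restrict_apply_le _ _) measure_Ioc_lt_top))
      exact this
    calc (∫ u in Set.Ioi (0:ℝ), ‖g t u‖)
        ≤ ∫ u in Set.Ioi (0:ℝ), Set.indicator (Set.Ioc 0 M) (fun _ => K) u :=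
          setIntegral_mono_on hint1 hint2 measurableSet_Ioi hmono
      _ ≤ K * M := by
          rw [integral_indicator measurableSet_Ioc, Measure.restrict_restrict measurableSet_Ioc,
            setIntegral_const]
          have hI : Set.Ioc (0:ℝ) M ∩ Set.Ioi 0 = Set.Ioc 0 M :=
            Set.inter_eq_left.mpr (fun x hx => hx.1)
          rw [hI, Real.volume_real_Ioc_of_le (by linarith), smul_eq_mul]
          exact le_of_eq (by ring)
  -- integrability of the norm-integral function
  have hbig : IntegrableOn
      (fun t => Real.exp (-s * t) * (1 + t ^ (a * M)) * (B / c) * M) (Set.Ioi (0:ℝ)) := by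
    have h1 : IntegrableOn
        (fun t => Real.exp (-t) * t ^ ((1:ℝ) - 1) + Real.exp (-t) * t ^ ((a * M + 1) - 1))
        (Set.Ioi (0:ℝ)) :=
      (Real.GammaIntegral_convergent one_pos).add
        (Real.GammaIntegral_convergent (by positivity))
    have h2 : IntegrableOn (fun t => Real.exp (-s * t) * (1 + t ^ (a * M))) (Set.Ioi (0:ℝ)) := by
      apply Integrable.mono' h1
      · apply ContinuousOn.aestronglyMeasurable _ measurableSet_Ioi
        apply ContinuousOn.mul (Real.continuous_exp.comp (by fun_prop)).continuousOn
        apply ContinuousOn.add continuousOn_const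
        intro x hx
        exact (Real.continuousAt_rpow_const x _ (Or.inl (ne_of_gt hx))).continuousWithinAt
      · filter_upwards [self_mem_ae_restrict measurableSet_Ioi] with t ht
        have ht0 : (0:ℝ) < t := ht
        have hexp : Real.exp (-s * t) ≤ Real.exp (-t) := by
          apply Real.exp_le_exp.2
          nlinarith
        have htM : (0:ℝ) ≤ t ^ (a * M) := (Real.rpow_pos_of_pos ht0 _).le
        rw [Real.norm_eq_abs, abs_of_nonneg (by positivity)]
        have e1 : t ^ ((1:ℝ) - 1) = 1 := by norm_num
        have e2 : (a * M + 1) - 1 = a * M := by ring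
        rw [e1, e2]
        have hexp0 : (0:ℝ) ≤ Real.exp (-s * t) := (Real.exp_pos _).le
        nlinarith [Real.exp_pos (-t), mul_le_mul_of_nonneg_right hexp htM]
    rw [IntegrableOn]
    simpa [mul_comm, mul_assoc, mul_left_comm] using (h2.mul_const (B / c * M))
  have hnormint : Integrable (fun t => ∫ u in Set.Ioi (0:ℝ), ‖g t u‖)
      (volume.restrict (Set.Ioi 0)) := by
    apply Integrable.mono' hbig
    · exact hmeas.norm.integral_prod_right'
    · filter_upwards [self_mem_ae_restrict measurableSet_Ioi] with t ht
      rw [Real.norm_eq_abs, abs_of_nonneg (integral_nonneg fun u => norm_nonneg _)]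
      exact hbound t ht
  -- product integrability
  have hprod : Integrable (Function.uncurry g)
      ((volume.restrict (Set.Ioi 0)).prod (volume.restrict (Set.Ioi 0))) := by
    rw [integrable_prod_iff hmeas]
    refine ⟨?_, hnormint⟩
    filter_upwards [self_mem_ae_restrict measurableSet_Ioi] with t ht
    exact hslice t ht
  -- inner integral computation
  have hinner : ∀ u ∈ Set.Ioi (0:ℝ),
      (∫ t in Set.Ioi (0:ℝ), g t u) = Real.exp (-(a * Real.log s) * u) * F u / s := by
    intro u hu
    have hΓ : (0:ℝ) < Real.Gamma (a * u + 1) := hGpos u (le_of_lt hu)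
    have hau1 : (0:ℝ) < a * u + 1 := by nlinarith [Set.mem_Ioi.1 hu]
    have h1 : (∫ t in Set.Ioi (0:ℝ), g t u)
        = (F u / Real.Gamma (a * u + 1)) *
          ∫ t in Set.Ioi (0:ℝ), t ^ ((a * u + 1) - 1) * Real.exp (-(s * t)) := by
      rw [← integral_const_mul]
      apply setIntegral_congr_fun measurableSet_Ioi
      intro t _
      have e : (a * u + 1) - 1 = a * u := by ring
      simp only [hgdef, e, neg_mul]
      ring
    rw [h1, integral_rpow_mul_exp_neg_mul_Ioi hau1 hs0]
    have hrw : ((1:ℝ) / s) ^ (a * u + 1) = Real.exp (-(a * Real.log s) * u) / s := by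
      rw [Real.rpow_add (by positivity), Real.rpow_one, one_div,
        Real.rpow_def_of_pos (by positivity), Real.log_inv]
      rw [show -Real.log s * (a * u) = -(a * Real.log s) * u by ring]
      ring
    rw [hrw]
    field_simp
  -- assemble
  calc ∫ t in Set.Ioi (0:ℝ), Real.exp (-s * t) *
          (∫ u in Set.Ioi (0:ℝ), t ^ (a * u) * F u / Real.Gamma (a * u + 1))
      = ∫ t in Set.Ioi (0:ℝ), ∫ u in Set.Ioi (0:ℝ), g t u := by
        apply setIntegral_congr_fun measurableSet_Ioi
        intro t _
        exact (integral_const_mul _ _).symm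
    _ = ∫ u in Set.Ioi (0:ℝ), ∫ t in Set.Ioi (0:ℝ), g t u := integral_integral_swap hprod
    _ = ∫ u in Set.Ioi (0:ℝ), Real.exp (-(a * Real.log s) * u) * F u / s :=
        setIntegral_congr_fun measurableSet_Ioi hinner
    _ = (∫ u in Set.Ioi (0:ℝ), Real.exp (-(a * Real.log s) * u) * F u) / s := by
        rw [integral_div]
end

section
/- Generalized implicit log transform with power shift: for a > 0, b ≥ 0, s > 1, and continuous compactly supported F on [0,∞), ∫₀^∞ e^(−s t) · (∫₀^∞ t^(a u + b) F(u) / Γ(a u + b + 1) du) dt = f(a · ln s) / s^(b+1), where f(w) = ∫₀^∞ e^(−w u) F(u) du. -/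
open MeasureTheory Real

lemma rpow_le_exp_mul_Gamma_aux {t p : ℝ} (ht : 0 < t) (hp : 0 ≤ p) :
    t ^ p ≤ Real.exp (t + 1) * Real.Gamma (p + 1) := by
  have key : Real.exp (-(t + 1)) * t ^ p ≤ Real.Gamma (p + 1) := by
    rw [Real.Gamma_eq_integral (by linarith)]
    have hInt : IntegrableOn (fun x : ℝ => Real.exp (-x) * x ^ (p + 1 - 1)) (Set.Ioi 0) :=
      Real.GammaIntegral_convergent (by linarith)
    have h1 : Real.exp (-(t + 1)) * t ^ p
        ≤ ∫ x in Set.Ioc t (t + 1), Real.exp (-x) * x ^ (p + 1 - 1) := by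
      have hconst : (∫ _x in Set.Ioc t (t + 1), Real.exp (-(t + 1)) * t ^ p)
          = Real.exp (-(t + 1)) * t ^ p := by
        rw [setIntegral_const]
        simp [Real.volume_Ioc]
      rw [← hconst]
      refine setIntegral_mono_on ?_ ?_ measurableSet_Ioc ?_
      · exact integrableOn_const (by simp [Real.volume_Ioc])
      · exact hInt.mono_set (fun x hx => Set.mem_Ioi.2 (lt_trans ht hx.1))
      · intro x hx
        have hx1 : t ≤ x := hx.1.le
        have hx2 : x ≤ t + 1 := hx.2
        have e1 : Real.exp (-(t + 1)) ≤ Real.exp (-x) :=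
          Real.exp_le_exp.2 (by linarith)
        have e2 : t ^ p ≤ x ^ (p + 1 - 1) := by
          rw [show p + 1 - 1 = p by ring]
          exact Real.rpow_le_rpow ht.le hx1 hp
        exact mul_le_mul e1 e2 (Real.rpow_nonneg ht.le p) (Real.exp_pos _).le
    have h2 : (∫ x in Set.Ioc t (t + 1), Real.exp (-x) * x ^ (p + 1 - 1))
        ≤ ∫ x in Set.Ioi 0, Real.exp (-x) * x ^ (p + 1 - 1) := by
      refine setIntegral_mono_set hInt ?_ ?_
      · filter_upwards [self_mem_ae_restrict measurableSet_Ioi] with x hx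
        exact mul_nonneg (Real.exp_pos _).le (Real.rpow_nonneg (le_of_lt hx) _)
      · exact Filter.Eventually.of_forall (fun x hx => Set.mem_Ioi.2 (lt_trans ht hx.1))
    linarith
  have h0 : Real.exp (t + 1) * Real.exp (-(t + 1)) = 1 := by
    rw [← Real.exp_add, add_neg_cancel, Real.exp_zero]
  calc t ^ p = Real.exp (t + 1) * (Real.exp (-(t + 1)) * t ^ p) := by
        rw [← mul_assoc, h0, one_mul]
    _ ≤ Real.exp (t + 1) * Real.Gamma (p + 1) :=
        mul_le_mul_of_nonneg_left key (Real.exp_pos _).le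

theorem stmt_7 (F : ℝ → ℝ) (hF : Continuous F) (hsupp : HasCompactSupport F)
    (hpos : Function.support F ⊆ Set.Ici 0) (a b s : ℝ) (ha : 0 < a) (hb : 0 ≤ b)
    (hs : 1 < s) :
    ∫ t in Set.Ioi (0:ℝ), Real.exp (-s * t) *
        (∫ u in Set.Ioi (0:ℝ), t ^ (a * u + b) * F u / Real.Gamma (a * u + b + 1))
      = (∫ u in Set.Ioi (0:ℝ), Real.exp (-(a * Real.log s) * u) * F u) / s ^ (b + 1) := by
  have hs0 : (0:ℝ) < s := lt_trans one_pos hs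
  obtain ⟨M, hM⟩ := hsupp.exists_bound_of_continuous hF
  set f : ℝ → ℝ → ℝ := fun t u =>
    Real.exp (-s * t) * (t ^ (a * u + b) * F u / Real.Gamma (a * u + b + 1)) with hf
  have hcont : ContinuousOn (Function.uncurry f) (Set.Ioi (0:ℝ) ×ˢ Set.Ioi (0:ℝ)) := by
    intro z hz
    obtain ⟨ht, hu⟩ := hz
    simp only [Set.mem_Ioi] at ht hu
    apply ContinuousAt.continuousWithinAt
    have hG : ContinuousAt (fun z : ℝ × ℝ => Real.Gamma (a * z.2 + b + 1)) z := by
      refine ContinuousAt.comp (g := Real.Gamma)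
        ((Real.differentiableAt_Gamma (fun m => ?_)).continuousAt) (by fun_prop)
      have : (0:ℝ) ≤ m := Nat.cast_nonneg m
      nlinarith
    have hrpow : ContinuousAt (fun z : ℝ × ℝ => z.1 ^ (a * z.2 + b)) z := by
      apply ContinuousAt.rpow
      · exact continuousAt_fst
      · fun_prop
      · exact Or.inl (ne_of_gt ht)
    have hGne : Real.Gamma (a * z.2 + b + 1) ≠ 0 :=
      (Real.Gamma_pos_of_pos (by positivity)).ne'
    exact ((Real.continuous_exp.comp (continuous_const.mul continuous_fst)).continuousAt).mul
      ((hrpow.mul ((hF.comp continuous_snd).continuousAt)).div hG hGne)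
  have hmeas : AEStronglyMeasurable (Function.uncurry f)
      ((volume.restrict (Set.Ioi (0:ℝ))).prod (volume.restrict (Set.Ioi (0:ℝ)))) := by
    rw [Measure.prod_restrict]
    exact hcont.aestronglyMeasurable (measurableSet_Ioi.prod measurableSet_Ioi)
  have hK : MeasurableSet (tsupport F) := (isClosed_tsupport F).measurableSet
  have hInt : Integrable (Function.uncurry f)
      ((volume.restrict (Set.Ioi (0:ℝ))).prod (volume.restrict (Set.Ioi (0:ℝ)))) := by
    have hg : Integrable (fun z : ℝ × ℝ =>
        (Real.exp 1 * Real.exp (-(s - 1) * z.1)) *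
          ((tsupport F).indicator (fun _ => M) z.2))
        ((volume.restrict (Set.Ioi (0:ℝ))).prod (volume.restrict (Set.Ioi (0:ℝ)))) := by
      exact Integrable.mul_prod
        ((exp_neg_integrableOn_Ioi 0 (by linarith : (0:ℝ) < s - 1)).const_mul _)
        ((integrable_indicator_iff hK).2
          (integrableOn_const hsupp.measure_lt_top.ne)).restrict
    refine hg.mono hmeas ?_
    rw [Measure.prod_restrict]
    filter_upwards [self_mem_ae_restrict (measurableSet_Ioi.prod measurableSet_Ioi)]
      with z hz
    obtain ⟨ht, hu⟩ := hz
    simp only [Set.mem_Ioi] at ht hu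
    have hp : 0 ≤ a * z.2 + b := by positivity
    have hG : 0 < Real.Gamma (a * z.2 + b + 1) := Real.Gamma_pos_of_pos (by linarith)
    have hb1 : |f z.1 z.2| ≤ Real.exp (-s * z.1) * (z.1 ^ (a * z.2 + b) * |F z.2|
        / Real.Gamma (a * z.2 + b + 1)) := by
      rw [hf]
      simp only [abs_mul, abs_div]
      rw [abs_of_pos (Real.exp_pos _), abs_of_pos hG,
        abs_of_nonneg (Real.rpow_nonneg ht.le _)]
    have hrb := rpow_le_exp_mul_Gamma_aux ht hp
    have hFz : |F z.2| ≤ (tsupport F).indicator (fun _ => M) z.2 := by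
      by_cases h : z.2 ∈ tsupport F
      · simpa [h] using (hM z.2 : ‖F z.2‖ ≤ M)
      · have : F z.2 = 0 := image_eq_zero_of_notMem_tsupport h
        simp [h, this]
    have hFz0 : 0 ≤ (tsupport F).indicator (fun _ => M) z.2 :=
      le_trans (abs_nonneg _) hFz
    calc ‖Function.uncurry f z‖ = |f z.1 z.2| := rfl
      _ ≤ Real.exp (-s * z.1) * (z.1 ^ (a * z.2 + b) * |F z.2|
          / Real.Gamma (a * z.2 + b + 1)) := hb1
      _ ≤ Real.exp (-s * z.1) * (Real.exp (z.1 + 1) *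
          ((tsupport F).indicator (fun _ => M) z.2)) := by
        apply mul_le_mul_of_nonneg_left _ (Real.exp_pos _).le
        rw [div_le_iff₀ hG]
        calc z.1 ^ (a * z.2 + b) * |F z.2|
            ≤ (Real.exp (z.1 + 1) * Real.Gamma (a * z.2 + b + 1)) *
              ((tsupport F).indicator (fun _ => M) z.2) :=
              mul_le_mul hrb hFz (abs_nonneg _) (by positivity)
          _ = Real.exp (z.1 + 1) * ((tsupport F).indicator (fun _ => M) z.2) *
              Real.Gamma (a * z.2 + b + 1) := by ring
      _ = (Real.exp 1 * Real.exp (-(s - 1) * z.1)) *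
          ((tsupport F).indicator (fun _ => M) z.2) := by
        rw [← mul_assoc, ← Real.exp_add, ← Real.exp_add]
        congr 2
        ring
      _ ≤ ‖(Real.exp 1 * Real.exp (-(s - 1) * z.1)) *
          ((tsupport F).indicator (fun _ => M) z.2)‖ := le_abs_self _
  have swap := MeasureTheory.integral_integral_swap hInt
  have hstep1 : (∫ t in Set.Ioi (0:ℝ), Real.exp (-s * t) *
        (∫ u in Set.Ioi (0:ℝ), t ^ (a * u + b) * F u / Real.Gamma (a * u + b + 1)))
      = ∫ t in Set.Ioi (0:ℝ), ∫ u in Set.Ioi (0:ℝ), f t u := by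
    refine setIntegral_congr_fun measurableSet_Ioi (fun t _ => ?_)
    rw [← integral_const_mul]
  rw [hstep1, swap]
  have hinner : ∀ u ∈ Set.Ioi (0:ℝ), (∫ t in Set.Ioi (0:ℝ), f t u)
      = Real.exp (-(a * Real.log s) * u) * F u / s ^ (b + 1) := by
    intro u hu
    have hu0 : 0 < u := hu
    have hp1 : 0 < a * u + b + 1 := by positivity
    have hG : 0 < Real.Gamma (a * u + b + 1) := Real.Gamma_pos_of_pos hp1
    have h1 : (∫ t in Set.Ioi (0:ℝ), f t u)
        = (F u / Real.Gamma (a * u + b + 1)) *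
          ∫ t in Set.Ioi (0:ℝ), t ^ (a * u + b + 1 - 1) * Real.exp (-(s * t)) := by
      rw [← integral_const_mul]
      refine setIntegral_congr_fun measurableSet_Ioi (fun t _ => ?_)
      rw [hf]
      show Real.exp (-s * t) * (t ^ (a * u + b) * F u / Real.Gamma (a * u + b + 1)) = _
      rw [show a * u + b + 1 - 1 = a * u + b by ring, neg_mul]
      ring
    rw [h1, Real.integral_rpow_mul_exp_neg_mul_Ioi hp1 hs0]
    have hss : (1/s) ^ (a*u+b+1) = Real.exp (-(a * Real.log s) * u) / s ^ (b+1) := by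
      rw [one_div, Real.inv_rpow hs0.le, show a*u+b+1 = a*u + (b+1) by ring,
        Real.rpow_add hs0, Real.rpow_def_of_pos hs0 (a*u), mul_inv, ← Real.exp_neg,
        div_eq_mul_inv, show -(Real.log s * (a*u)) = -(a*Real.log s)*u by ring]
    rw [hss]
    field_simp
  rw [setIntegral_congr_fun measurableSet_Ioi (fun u hu => hinner u hu)]
  rw [integral_div]
end

section
/- Translated implicit log transform: for a > 0, b ≥ 0, real α, s > α + 1, and continuous compactly supported F on [0,∞), ∫₀^∞ e^(−s t) · e^(α t) · (∫₀^∞ t^(a u + b) F(u) / Γ(a u + b + 1) du) dt = f(a · ln(s − α)) / (s − α)^(b+1), where f(w) = ∫₀^∞ e^(−w u) F(u) du. -/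
open MeasureTheory Real

-- key pointwise bound: t^p ≤ Γ(p+1) e^t
lemma rpow_le_Gamma_mul_exp {p t : ℝ} (hp : 0 ≤ p) (ht : 0 < t) :
    t ^ p ≤ Real.Gamma (p + 1) * Real.exp t := by
  have h1 : (0:ℝ) < p + 1 := by linarith
  have hΓ : Real.Gamma (p + 1) = ∫ x in Set.Ioi (0:ℝ), Real.exp (-x) * x ^ p := by
    rw [Real.Gamma_eq_integral h1]; simp
  have hconv : IntegrableOn (fun x : ℝ => Real.exp (-x) * x ^ p) (Set.Ioi 0) := by
    have := Real.GammaIntegral_convergent h1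
    simpa using this
  have h2 : t ^ p * Real.exp (-t) ≤ Real.Gamma (p + 1) := by
    rw [hΓ]
    calc t ^ p * Real.exp (-t)
        = ∫ x in Set.Ioi t, Real.exp (-x) * t ^ p := by
          rw [MeasureTheory.integral_mul_const, integral_exp_neg_Ioi]; ring
      _ ≤ ∫ x in Set.Ioi t, Real.exp (-x) * x ^ p := by
          refine setIntegral_mono_on ?_ (hconv.mono_set (Set.Ioi_subset_Ioi ht.le))
            measurableSet_Ioi (fun x hx => ?_)
          · have : IntegrableOn (fun x : ℝ => Real.exp (-(1:ℝ) * x)) (Set.Ioi t) :=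
              exp_neg_integrableOn_Ioi t one_pos
            exact (by simpa using this.mul_const (t ^ p) :
              Integrable (fun x : ℝ => Real.exp (-x) * t ^ p) (volume.restrict (Set.Ioi t)))
          · exact mul_le_mul_of_nonneg_left
              (Real.rpow_le_rpow ht.le (le_of_lt hx) hp) (Real.exp_pos _).le
      _ ≤ ∫ x in Set.Ioi 0, Real.exp (-x) * x ^ p := by
          refine setIntegral_mono_set hconv ?_
            (HasSubset.Subset.eventuallyLE (Set.Ioi_subset_Ioi ht.le))
          filter_upwards [ae_restrict_mem measurableSet_Ioi] with x hx
          have : (0:ℝ) < x := hx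
          positivity
  calc t ^ p = t ^ p * Real.exp (-t) * Real.exp t := by
        rw [mul_assoc, ← Real.exp_add]; simp
    _ ≤ Real.Gamma (p + 1) * Real.exp t :=
        mul_le_mul_of_nonneg_right h2 (Real.exp_pos _).le

theorem stmt_8 (F : ℝ → ℝ) (hF : Continuous F) (hsupp : HasCompactSupport F)
    (hpos : Function.support F ⊆ Set.Ici 0) (a b α s : ℝ) (ha : 0 < a) (hb : 0 ≤ b)
    (hs : α + 1 < s) :
    ∫ t in Set.Ioi (0:ℝ), Real.exp (-s * t) * Real.exp (α * t) *
        (∫ u in Set.Ioi (0:ℝ), t ^ (a * u + b) * F u / Real.Gamma (a * u + b + 1))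
      = (∫ u in Set.Ioi (0:ℝ), Real.exp (-(a * Real.log (s - α)) * u) * F u)
          / (s - α) ^ (b + 1) := by
  set σ := s - α with hσdef
  have hσ : 1 < σ := by simp [hσdef]; linarith
  have hσ0 : 0 < σ := by linarith
  -- step 1: rewrite exponentials
  have hexp : ∀ t : ℝ, Real.exp (-s * t) * Real.exp (α * t) = Real.exp (-(σ * t)) := by
    intro t; rw [← Real.exp_add, hσdef]; ring_nf
  -- the two-variable function
  set g : ℝ × ℝ → ℝ := fun q =>
    Real.exp (-(σ * q.1)) * (q.1 ^ (a * q.2 + b) * F q.2 / Real.Gamma (a * q.2 + b + 1)) with hg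
  have hFi : Integrable F := hF.integrable_of_hasCompactSupport hsupp
  -- integrability of g on the product
  have hgi : Integrable (Function.uncurry fun t u =>
      Real.exp (-(σ * t)) * (t ^ (a * u + b) * F u / Real.Gamma (a * u + b + 1)))
      ((volume.restrict (Set.Ioi 0)).prod (volume.restrict (Set.Ioi 0))) := by
    have hprod : (volume.restrict (Set.Ioi (0:ℝ))).prod (volume.restrict (Set.Ioi (0:ℝ)))
        = (volume.prod volume).restrict ((Set.Ioi (0:ℝ)) ×ˢ (Set.Ioi (0:ℝ))) :=
      Measure.prod_restrict _ _
    rw [hprod]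
    have hmeas : AEStronglyMeasurable g
        ((volume.prod volume).restrict ((Set.Ioi (0:ℝ)) ×ˢ (Set.Ioi (0:ℝ)))) := by
      refine ContinuousOn.aestronglyMeasurable ?_ (measurableSet_Ioi.prod measurableSet_Ioi)
      have hΓcont : ContinuousOn (fun q : ℝ × ℝ => Real.Gamma (a * q.2 + b + 1))
          ((Set.Ioi (0:ℝ)) ×ˢ (Set.Ioi (0:ℝ))) := by
        intro q hq
        have hq2 : 0 < q.2 := hq.2
        have : ContinuousAt (fun q : ℝ × ℝ => Real.Gamma (a * q.2 + b + 1)) q := by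
          have hd : DifferentiableAt ℝ Real.Gamma (a * q.2 + b + 1) := by
            apply Real.differentiableAt_Gamma
            intro m
            have : (0:ℝ) < a * q.2 + b + 1 := by positivity
            have hm : -(m:ℝ) ≤ 0 := neg_nonpos.mpr (Nat.cast_nonneg m)
            exact ne_of_gt (lt_of_le_of_lt hm this)
          show ContinuousAt (Real.Gamma ∘ fun q : ℝ × ℝ => a * q.2 + b + 1) q
          exact ContinuousAt.comp (g := Real.Gamma) (f := fun q : ℝ × ℝ => a * q.2 + b + 1) (x := q)
            hd.continuousAt ((by fun_prop : Continuous fun q : ℝ × ℝ => a * q.2 + b + 1).continuousAt)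
        exact this.continuousWithinAt
      refine ContinuousOn.mul (by fun_prop) ?_
      refine ContinuousOn.div ?_ hΓcont ?_
      · refine ContinuousOn.mul ?_ (hF.comp continuous_snd).continuousOn
        apply ContinuousOn.rpow (continuous_fst.continuousOn) (by fun_prop)
        intro q hq; left; exact ne_of_gt hq.1
      · intro q hq
        have h2 : (0:ℝ) < q.2 := hq.2
        have : (0:ℝ) < a * q.2 + b + 1 := by positivity
        exact ne_of_gt (Real.Gamma_pos_of_pos this)
    have hbd : Integrable (fun q : ℝ × ℝ => Real.exp (-(σ - 1) * q.1) * |F q.2|)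
        ((volume.prod volume).restrict ((Set.Ioi (0:ℝ)) ×ˢ (Set.Ioi (0:ℝ)))) := by
      have hb1 : Integrable (fun t : ℝ => Real.exp (-(σ - 1) * t))
          (volume.restrict (Set.Ioi 0)) := exp_neg_integrableOn_Ioi 0 (by linarith)
      have hb2 : Integrable (fun u : ℝ => |F u|) (volume.restrict (Set.Ioi 0)) :=
        (hFi.restrict).abs
      have := hb1.mul_prod hb2
      rwa [hprod] at this
    refine Integrable.mono' hbd hmeas ?_
    filter_upwards [ae_restrict_mem (measurableSet_Ioi.prod measurableSet_Ioi)] with q hq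
    obtain ⟨ht, hu⟩ := hq
    have ht : (0:ℝ) < q.1 := ht
    have hu : (0:ℝ) < q.2 := hu
    have hp : (0:ℝ) ≤ a * q.2 + b := by positivity
    have hΓpos : 0 < Real.Gamma (a * q.2 + b + 1) := Real.Gamma_pos_of_pos (by linarith)
    have key := rpow_le_Gamma_mul_exp hp ht
    rw [Function.uncurry, Real.norm_eq_abs, abs_mul, abs_of_nonneg (Real.exp_pos _).le,
      abs_div, abs_of_pos hΓpos, abs_mul, abs_of_nonneg (Real.rpow_nonneg ht.le _)]
    have hexp2 : Real.exp (-(σ - 1) * q.1) = Real.exp (-(σ * q.1)) * Real.exp q.1 := by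
      rw [← Real.exp_add]; ring_nf
    rw [hexp2, mul_assoc]
    refine mul_le_mul_of_nonneg_left ?_ (Real.exp_pos _).le
    rw [div_le_iff₀ hΓpos]
    nlinarith [abs_nonneg (F q.2), Real.exp_pos q.1]
  -- now rewrite and swap
  calc ∫ t in Set.Ioi (0:ℝ), Real.exp (-s * t) * Real.exp (α * t) *
        (∫ u in Set.Ioi (0:ℝ), t ^ (a * u + b) * F u / Real.Gamma (a * u + b + 1))
      = ∫ t in Set.Ioi (0:ℝ), ∫ u in Set.Ioi (0:ℝ),
          Real.exp (-(σ * t)) * (t ^ (a * u + b) * F u / Real.Gamma (a * u + b + 1)) := by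
        refine setIntegral_congr_fun measurableSet_Ioi (fun t _ => ?_)
        rw [hexp t, MeasureTheory.integral_const_mul]
    _ = ∫ u in Set.Ioi (0:ℝ), ∫ t in Set.Ioi (0:ℝ),
          Real.exp (-(σ * t)) * (t ^ (a * u + b) * F u / Real.Gamma (a * u + b + 1)) :=
        MeasureTheory.integral_integral_swap hgi
    _ = ∫ u in Set.Ioi (0:ℝ), (Real.exp (-(a * Real.log σ) * u) * F u) * (σ ^ (b + 1))⁻¹ := by
        refine setIntegral_congr_fun measurableSet_Ioi (fun u hu => ?_)
        have hu : (0:ℝ) < u := hu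
        have hp1 : (0:ℝ) < a * u + b + 1 := by positivity
        have hΓpos : 0 < Real.Gamma (a * u + b + 1) := Real.Gamma_pos_of_pos hp1
        have hint : (∫ t in Set.Ioi (0:ℝ),
            Real.exp (-(σ * t)) * (t ^ (a * u + b) * F u / Real.Gamma (a * u + b + 1)))
            = (∫ t in Set.Ioi (0:ℝ), t ^ ((a * u + b + 1) - 1) * Real.exp (-(σ * t)))
              * (F u / Real.Gamma (a * u + b + 1)) := by
          rw [← MeasureTheory.integral_mul_const]
          refine setIntegral_congr_fun measurableSet_Ioi (fun t _ => ?_)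
          simp only [add_sub_cancel_right]
          ring
        rw [hint, integral_rpow_mul_exp_neg_mul_Ioi hp1 hσ0]
        have h1 : ((1:ℝ) / σ) ^ (a * u + b + 1) = σ ^ (-(a * u + b + 1)) := by
          rw [Real.div_rpow zero_le_one hσ0.le, Real.one_rpow, Real.rpow_neg hσ0.le, one_div]
        have h2 : σ ^ (-(a * u + b + 1))
            = Real.exp (-(a * Real.log σ) * u) * (σ ^ (b + 1))⁻¹ := by
          rw [show -(a * u + b + 1) = (-(a * u)) + (-(b + 1)) by ring, Real.rpow_add hσ0,
            Real.rpow_neg hσ0.le (b + 1)]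
          congr 1
          rw [Real.rpow_def_of_pos hσ0]
          ring_nf
        rw [h1, h2]
        field_simp
    _ = (∫ u in Set.Ioi (0:ℝ), Real.exp (-(a * Real.log (s - α)) * u) * F u)
          / (s - α) ^ (b + 1) := by
        rw [MeasureTheory.integral_mul_const, div_eq_mul_inv]
end

section
/- Finite sum version: for a > 0, b ≥ 0, real α, s > α + 1, coefficients c₀,…,c_N ∈ ℝ, and continuous compactly supported F on [0,∞), ∫₀^∞ e^(−s t) · e^(α t) · (Σ_{n=0}^{N} c_n · t^n · ∫₀^∞ t^(a u + b) F(u) / Γ(a u + b + n + 1) du) dt = f(a·ln(s−α)) · Σ_{n=0}^{N} c_n / (s−α)^(n+b+1), where f(w) = ∫₀^∞ e^(−w u) F(u) du. -/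
set_option maxHeartbeats 1000000

open MeasureTheory Real Set

private lemma gamma_aux {σ p : ℝ} (hσ : 0 < σ) (hp : 0 < p) :
    ∫ t in Ioi (0:ℝ), Real.exp (-σ * t) * t ^ (p - 1) = (1 / σ) ^ p * Real.Gamma p := by
  rw [← integral_rpow_mul_exp_neg_mul_Ioi hp hσ]
  refine setIntegral_congr_fun measurableSet_Ioi fun t ht => ?_
  rw [neg_mul, mul_comm]

private lemma integrable_aux (F : ℝ → ℝ) (hF : Continuous F) (hsupp : HasCompactSupport F)
    (a b σ : ℝ) (ha : 0 < a) (hb : 0 ≤ b) (hσ : 0 < σ) (n : ℕ) :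
    Integrable (fun p : ℝ × ℝ => Real.exp (-σ * p.1) * p.1 ^ (a * p.2 + b + n) *
        (F p.2 / Real.Gamma (a * p.2 + b + n + 1)))
      ((volume.restrict (Ioi 0)).prod (volume.restrict (Ioi 0))) := by
  -- bound on support
  obtain ⟨R0, hR0⟩ := hsupp.isCompact.isBounded.subset_closedBall 0
  set R : ℝ := max R0 0 with hRdef
  have hR : 0 ≤ R := le_max_right _ _
  have hFz : ∀ u, R < u → F u = 0 := by
    intro u hu
    apply image_eq_zero_of_notMem_tsupport
    intro hmem
    have := hR0 hmem
    simp only [Metric.mem_closedBall, Real.dist_eq, sub_zero] at this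
    have : u ≤ R0 := (abs_le.1 this).2
    exact absurd this (not_le.2 (lt_of_le_of_lt (le_max_left R0 0) hu))
  -- sup bound on F
  obtain ⟨u₀, hu₀⟩ := (hF.abs).exists_forall_ge_of_hasCompactSupport hsupp.abs
  set C : ℝ := |F u₀| with hCdef
  have hC0 : 0 ≤ C := abs_nonneg _
  have hC : ∀ u, |F u| ≤ C := hu₀
  -- Gamma lower bound
  set K : ℝ := a * R + b + n + 1 with hKdef
  have h1K : (1:ℝ) ≤ K := by
    have : 0 ≤ a * R := mul_nonneg ha.le hR
    have : 0 ≤ (n:ℝ) := Nat.cast_nonneg n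
    simp only [hKdef]; nlinarith [mul_nonneg ha.le hR]
  obtain ⟨x₀, hx₀mem, hx₀⟩ := isCompact_Icc.exists_isMinOn (⟨1, by constructor <;> linarith⟩ :
      (Icc (1:ℝ) K).Nonempty) (fun x hx => (Real.differentiableAt_Gamma (fun m => by
        have h1 : (1:ℝ) ≤ x := hx.1
        have : (0:ℝ) ≤ (m:ℝ) := Nat.cast_nonneg m
        intro h; rw [h] at h1; linarith)).continuousAt.continuousWithinAt)
  set ε : ℝ := Real.Gamma x₀ with hεdef
  have hε : 0 < ε := Real.Gamma_pos_of_pos (by linarith [hx₀mem.1])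
  have hεle : ∀ x ∈ Icc (1:ℝ) K, ε ≤ Real.Gamma x := fun x hx => hx₀ hx
  set M : ℝ := a * R + b + n with hMdef
  have hM0 : 0 ≤ M := by simp only [hMdef]; positivity
  -- dominating function
  set G : ℝ × ℝ → ℝ := fun p =>
    ((C / ε) * (Real.exp (-σ * p.1) * (1 + p.1 ^ M))) * indicator (Icc 0 R) (fun _ => (1:ℝ)) p.2
    with hGdef
  have hG : Integrable G ((volume.restrict (Ioi 0)).prod (volume.restrict (Ioi 0))) := by
    have hf : Integrable (fun t : ℝ => C / ε * (Real.exp (-σ * t) * (1 + t ^ M)))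
        (volume.restrict (Ioi 0)) := by
      have h2 : IntegrableOn (fun t : ℝ => t ^ M * Real.exp (-σ * t)) (Ioi 0) := by
        have := integrableOn_rpow_mul_exp_neg_mul_rpow (by linarith : (-1:ℝ) < M)
          (zero_lt_one' ℝ) hσ
        simpa [Real.rpow_one] using this
      have h1 : IntegrableOn (fun t : ℝ => Real.exp (-σ * t)) (Ioi 0) :=
        exp_neg_integrableOn_Ioi 0 hσ
      have heq : (fun t : ℝ => C / ε * (Real.exp (-σ * t) * (1 + t ^ M)))
          = fun t : ℝ => C / ε * (Real.exp (-σ * t) + t ^ M * Real.exp (-σ * t)) :=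
        funext fun t => by ring
      rw [heq]
      exact (h1.add h2).const_mul (C / ε)
    have hg2 : Integrable (fun u : ℝ => indicator (Icc (0:ℝ) R) (fun _ => (1:ℝ)) u)
        (volume.restrict (Ioi 0)) := by
      have : Integrable (indicator (Icc (0:ℝ) R) (fun _ => (1:ℝ))) volume := by
        rw [integrable_indicator_iff measurableSet_Icc]
        exact integrableOn_const measure_Icc_lt_top.ne
      exact this.restrict
    exact hf.mul_prod hg2
  -- measurability
  have hmeas : AEStronglyMeasurable
      (fun p : ℝ × ℝ => Real.exp (-σ * p.1) * p.1 ^ (a * p.2 + b + n) *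
        (F p.2 / Real.Gamma (a * p.2 + b + n + 1)))
      ((volume.restrict (Ioi 0)).prod (volume.restrict (Ioi 0))) := by
    rw [Measure.prod_restrict]
    apply ContinuousOn.aestronglyMeasurable ?_ (measurableSet_Ioi.prod measurableSet_Ioi)
    apply ContinuousOn.mul
    · apply ContinuousOn.mul
      · exact (Real.continuous_exp.comp (continuous_const.mul continuous_fst)).continuousOn
      · apply ContinuousOn.rpow continuous_fst.continuousOn
          (((continuous_const.mul continuous_snd).add continuous_const).add
            continuous_const).continuousOn
        intro p hp
        exact Or.inl (ne_of_gt hp.1)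
    · apply ContinuousOn.div (hF.comp continuous_snd).continuousOn
      · intro p hp
        have harg : 0 < a * p.2 + b + n + 1 := by
          have := hp.2; have := mul_pos ha (hp.2 : (0:ℝ) < p.2); positivity
        have hlin : ContinuousAt (fun q : ℝ × ℝ => a * q.2 + b + n + 1) p := by fun_prop
        have hΓc : ContinuousAt Real.Gamma (a * p.2 + b + n + 1) := by
          refine (Real.differentiableAt_Gamma (fun m => ?_)).continuousAt
          intro h
          have hm : (0:ℝ) ≤ (m:ℝ) := Nat.cast_nonneg m
          linarith
        have hcomp : ContinuousAt (fun q : ℝ × ℝ => Real.Gamma (a * q.2 + b + n + 1)) p :=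
          ContinuousAt.comp (f := fun q : ℝ × ℝ => a * q.2 + b + n + 1) hΓc hlin
        exact hcomp.continuousWithinAt
      · intro p hp
        have harg : 0 < a * p.2 + b + n + 1 := by
          have := mul_pos ha (hp.2 : (0:ℝ) < p.2); positivity
        exact ne_of_gt (Real.Gamma_pos_of_pos harg)
  refine hG.mono' hmeas ?_
  rw [Measure.prod_restrict]
  filter_upwards [ae_restrict_mem (measurableSet_Ioi.prod measurableSet_Ioi)] with p hp
  obtain ⟨ht, hu⟩ := hp
  simp only [mem_Ioi] at ht hu
  by_cases hcase : p.2 ≤ R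
  · have hind : indicator (Icc (0:ℝ) R) (fun _ => (1:ℝ)) p.2 = 1 :=
      indicator_of_mem (mem_Icc.mpr ⟨hu.le, hcase⟩) _
    have harg : a * p.2 + b + n + 1 ∈ Icc (1:ℝ) K := by
      constructor
      · have := mul_pos ha hu; have : 0 ≤ (n:ℝ) := Nat.cast_nonneg n; nlinarith [mul_pos ha hu]
      · have : a * p.2 ≤ a * R := mul_le_mul_of_nonneg_left hcase ha.le
        simp only [hKdef]; linarith
    have hΓ : ε ≤ Real.Gamma (a * p.2 + b + n + 1) := hεle _ harg
    have hΓ0 : 0 < Real.Gamma (a * p.2 + b + n + 1) := lt_of_lt_of_le hε hΓ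
    have hpow : p.1 ^ (a * p.2 + b + n) ≤ 1 + p.1 ^ M := by
      rcases le_or_gt p.1 1 with h1 | h1
      · have : p.1 ^ (a * p.2 + b + n) ≤ 1 := by
          apply Real.rpow_le_one ht.le h1
          have := mul_pos ha hu; positivity
        have : 0 ≤ p.1 ^ M := Real.rpow_nonneg ht.le M
        linarith [Real.rpow_le_one ht.le h1 (by positivity : (0:ℝ) ≤ a * p.2 + b + n)]
      · have : p.1 ^ (a * p.2 + b + n) ≤ p.1 ^ M := by
          apply Real.rpow_le_rpow_of_exponent_le h1.le
          have : a * p.2 ≤ a * R := mul_le_mul_of_nonneg_left hcase ha.le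
          simp only [hMdef]; linarith
        linarith
    rw [hGdef]
    simp only [hind, mul_one]
    rw [Real.norm_eq_abs, abs_mul, abs_mul, abs_of_nonneg (Real.exp_pos _).le,
      abs_of_nonneg (Real.rpow_nonneg ht.le _), abs_div, abs_of_pos hΓ0]
    have hexp : (0:ℝ) < Real.exp (-σ * p.1) := Real.exp_pos _
    have h1 : |F p.2| / Real.Gamma (a * p.2 + b + n + 1) ≤ C / ε :=
      div_le_div₀ hC0 (hC p.2) hε hΓ
    calc Real.exp (-σ * p.1) * p.1 ^ (a * p.2 + b + n) *
          (|F p.2| / Real.Gamma (a * p.2 + b + n + 1))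
        ≤ Real.exp (-σ * p.1) * (1 + p.1 ^ M) * (C / ε) := by
          apply mul_le_mul
          · exact mul_le_mul_of_nonneg_left hpow hexp.le
          · exact h1
          · positivity
          · positivity
      _ = C / ε * (Real.exp (-σ * p.1) * (1 + p.1 ^ M)) := by ring
  · have : F p.2 = 0 := hFz p.2 (not_le.1 hcase)
    rw [this]
    simp only [zero_div, mul_zero, norm_zero, hGdef]
    have : (0:ℝ) ≤ indicator (Icc (0:ℝ) R) (fun _ => (1:ℝ)) p.2 :=
      indicator_nonneg (fun _ _ => zero_le_one) _
    positivity

theorem stmt_9 (F : ℝ → ℝ) (hF : Continuous F) (hsupp : HasCompactSupport F)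
    (hpos : Function.support F ⊆ Set.Ici 0) (a b α s : ℝ) (ha : 0 < a) (hb : 0 ≤ b)
    (hs : α + 1 < s) (N : ℕ) (c : ℕ → ℝ) :
    ∫ t in Set.Ioi (0:ℝ), Real.exp (-s * t) * Real.exp (α * t) *
        (∑ n ∈ Finset.range (N + 1), c n * t ^ n *
          ∫ u in Set.Ioi (0:ℝ), t ^ (a * u + b) * F u / Real.Gamma (a * u + b + n + 1))
      = (∫ u in Set.Ioi (0:ℝ), Real.exp (-(a * Real.log (s - α)) * u) * F u) *
          ∑ n ∈ Finset.range (N + 1), c n / (s - α) ^ ((n : ℝ) + b + 1) := by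
  set σ : ℝ := s - α with hσdef
  have hσ1 : 1 < σ := by simp only [hσdef]; linarith
  have hσ0 : 0 < σ := by linarith
  set g : ℕ → ℝ × ℝ → ℝ := fun n p => Real.exp (-σ * p.1) * p.1 ^ (a * p.2 + b + n) *
      (F p.2 / Real.Gamma (a * p.2 + b + n + 1)) with hgdef
  have hint : ∀ n : ℕ, Integrable (g n)
      ((volume.restrict (Set.Ioi 0)).prod (volume.restrict (Set.Ioi 0))) :=
    fun n => integrable_aux F hF hsupp a b σ ha hb hσ0 n
  calc ∫ t in Set.Ioi (0:ℝ), Real.exp (-s * t) * Real.exp (α * t) *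
        (∑ n ∈ Finset.range (N + 1), c n * t ^ n *
          ∫ u in Set.Ioi (0:ℝ), t ^ (a * u + b) * F u / Real.Gamma (a * u + b + n + 1))
      = ∫ t in Set.Ioi (0:ℝ), ∑ n ∈ Finset.range (N + 1),
          c n * ∫ u in Set.Ioi (0:ℝ), g n (t, u) := by
        refine setIntegral_congr_fun measurableSet_Ioi fun t ht => ?_
        have ht0 : (0:ℝ) < t := ht
        have hexp : Real.exp (-s * t) * Real.exp (α * t) = Real.exp (-σ * t) := by
          rw [← Real.exp_add]; congr 1; simp only [hσdef]; ring
        rw [hexp, Finset.mul_sum]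
        refine Finset.sum_congr rfl fun n _ => ?_
        have hsplit : (fun u => g n (t, u)) =
            fun u => (Real.exp (-σ * t) * t ^ n) *
              (t ^ (a * u + b) * F u / Real.Gamma (a * u + b + n + 1)) := by
          funext u
          simp only [hgdef]
          rw [show a * u + b + (n:ℝ) = (a * u + b) + (n:ℝ) by ring,
            Real.rpow_add ht0, Real.rpow_natCast]
          ring
        rw [hsplit, integral_const_mul]
        ring
    _ = ∑ n ∈ Finset.range (N + 1),
          c n * ∫ t in Set.Ioi (0:ℝ), ∫ u in Set.Ioi (0:ℝ), g n (t, u) := by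
        have hin : ∀ n ∈ Finset.range (N + 1),
            Integrable (fun t : ℝ => c n * ∫ u in Set.Ioi (0:ℝ), g n (t, u))
              (volume.restrict (Set.Ioi 0)) := by
          intro n _
          have h1 : Integrable (fun t : ℝ => ∫ u in Set.Ioi (0:ℝ), g n (t, u))
              (volume.restrict (Set.Ioi 0)) := (hint n).integral_prod_left
          exact h1.const_mul _
        rw [integral_finset_sum _ hin]
        exact Finset.sum_congr rfl fun n _ => integral_const_mul _ _
    _ = ∑ n ∈ Finset.range (N + 1),
          c n * ∫ u in Set.Ioi (0:ℝ), ∫ t in Set.Ioi (0:ℝ), g n (t, u) := by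
        refine Finset.sum_congr rfl fun n _ => ?_
        congr 1
        exact integral_integral_swap (hint n)
    _ = ∑ n ∈ Finset.range (N + 1), c n *
          ((∫ u in Set.Ioi (0:ℝ), Real.exp (-(a * Real.log σ) * u) * F u) *
            (1 / σ) ^ ((n:ℝ) + b + 1)) := by
        refine Finset.sum_congr rfl fun n _ => ?_
        congr 1
        rw [← integral_mul_const]
        refine setIntegral_congr_fun measurableSet_Ioi fun u hu => ?_
        have hu0 : (0:ℝ) < u := hu
        have hau : 0 < a * u := mul_pos ha hu0
        have hp : (0:ℝ) < a * u + b + n + 1 := by positivity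
        have hΓ : (0:ℝ) < Real.Gamma (a * u + b + n + 1) := Real.Gamma_pos_of_pos hp
        have hconst : (fun t : ℝ => g n (t, u)) =
            fun t : ℝ => (Real.exp (-σ * t) * t ^ ((a * u + b + n + 1) - 1)) *
              (F u / Real.Gamma (a * u + b + n + 1)) := by
          funext t
          simp only [hgdef]
          norm_num
        rw [hconst, integral_mul_const, gamma_aux hσ0 hp]
        have hsplitpow : (1 / σ) ^ (a * u + b + (n:ℝ) + 1)
            = Real.exp (-(a * Real.log σ) * u) * (1 / σ) ^ ((n:ℝ) + b + 1) := by
          rw [show a * u + b + (n:ℝ) + 1 = a * u + ((n:ℝ) + b + 1) by ring,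
            Real.rpow_add (by positivity), Real.rpow_def_of_pos (by positivity : (0:ℝ) < 1/σ),
            Real.log_div one_ne_zero (ne_of_gt hσ0), Real.log_one]
          ring_nf
        rw [hsplitpow]
        field_simp
    _ = (∫ u in Set.Ioi (0:ℝ), Real.exp (-(a * Real.log σ) * u) * F u) *
          ∑ n ∈ Finset.range (N + 1), c n / σ ^ ((n : ℝ) + b + 1) := by
        rw [Finset.mul_sum]
        refine Finset.sum_congr rfl fun n _ => ?_
        rw [div_rpow (by norm_num) hσ0.le, Real.one_rpow]
        ring
end

section
/- For b > −1 and s > 0, ∫₀^∞ e^(−s t) · ( − t^b / Γ(b+1) · ( ln t − Γ'(b+1)/Γ(b+1) ) ) dt = ln(s) / s^(b+1). -/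
open MeasureTheory Real Set Filter Asymptotics
open scoped Topology

-- mellin key lemma for f t = exp(-t)
lemma aux_key (b : ℝ) (hb : -1 < b) :
    MellinConvergent (fun t : ℝ => Real.log t • ((Real.exp (-t) : ℝ) : ℂ)) ((b:ℂ)+1) ∧
      HasDerivAt (mellin (fun t : ℝ => ((Real.exp (-t) : ℝ) : ℂ)))
        (mellin (fun t : ℝ => Real.log t • ((Real.exp (-t) : ℝ) : ℂ)) ((b:ℂ)+1)) ((b:ℂ)+1) := by
  have hre : 0 < ((b:ℂ)+1).re := by simp; linarith
  refine mellin_hasDerivAt_of_isBigO_rpow (a := ((b:ℂ)+1).re + 1) (b := 0) ?_ ?_ (lt_add_one _) ?_ hre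
  · refine (Continuous.continuousOn ?_).locallyIntegrableOn measurableSet_Ioi
    exact Complex.continuous_ofReal.comp (Real.continuous_exp.comp continuous_neg)
  · rw [← isBigO_norm_left]
    simp_rw [Complex.norm_real, isBigO_norm_left]
    simpa only [neg_one_mul] using (isLittleO_exp_neg_mul_rpow_atTop zero_lt_one _).isBigO
  · simp_rw [neg_zero, rpow_zero]
    refine isBigO_const_of_tendsto (?_ : Tendsto _ _ (𝓝 (1 : ℂ))) one_ne_zero
    rw [(by simp : (1 : ℂ) = Real.exp (-0))]
    exact (Complex.continuous_ofReal.comp (Real.continuous_exp.comp continuous_neg)).continuousWithinAt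
lemma aux_eqfun (b : ℝ) {t : ℝ} (ht : t ∈ Ioi (0:ℝ)) :
    (t:ℂ) ^ ((b:ℂ) + 1 - 1) • (Real.log t • ((Real.exp (-t) : ℝ) : ℂ))
      = ((Real.exp (-t) * t ^ b * Real.log t : ℝ) : ℂ) := by
  rw [add_sub_cancel_right, ← Complex.ofReal_cpow (le_of_lt ht)]
  simp only [smul_eq_mul, Complex.real_smul, Complex.ofReal_mul]
  push_cast
  ring
lemma aux_B0 (b : ℝ) (hb : -1 < b) :
    IntegrableOn (fun t : ℝ => Real.exp (-t) * t ^ b * Real.log t) (Ioi 0) := by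
  have h := (aux_key b hb).1
  rw [MellinConvergent] at h
  have h2 : IntegrableOn (fun t : ℝ => ((Real.exp (-t) * t ^ b * Real.log t : ℝ) : ℂ)) (Ioi 0) :=
    h.congr_fun (fun t ht => aux_eqfun b ht) measurableSet_Ioi
  have h3 := h2.re
  simp only [RCLike.re_to_complex, Complex.ofReal_re] at h3
  exact h3

lemma aux_D (b : ℝ) (hb : -1 < b) :
    deriv Real.Gamma (b + 1) = ∫ t in Ioi (0:ℝ), Real.exp (-t) * t ^ b * Real.log t := by
  have key := (aux_key b hb).2
  rw [← Complex.GammaIntegral_eq_mellin] at key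
  have hG : HasDerivAt Complex.Gamma
      (mellin (fun t : ℝ => Real.log t • ((Real.exp (-t) : ℝ) : ℂ)) ((b:ℂ)+1)) ((b:ℂ)+1) := by
    refine key.congr_of_eventuallyEq ?_
    have hopen : IsOpen {z : ℂ | 0 < z.re} := isOpen_lt continuous_const Complex.continuous_re
    refine eventuallyEq_of_mem (hopen.mem_nhds ?_) (fun z hz => Complex.Gamma_eq_integral hz)
    simp only [Set.mem_setOf_eq, Complex.add_re, Complex.ofReal_re, Complex.one_re]
    linarith
  have hG' : HasDerivAt Complex.Gamma
      (mellin (fun t : ℝ => Real.log t • ((Real.exp (-t) : ℝ) : ℂ)) ((b:ℂ)+1)) ((b+1 : ℝ) : ℂ) := by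
    rwa [Complex.ofReal_add, Complex.ofReal_one]
  have hR := hG'.real_of_complex
  have hfun : (fun x : ℝ => (Complex.Gamma (x:ℂ)).re) = Real.Gamma := by
    funext x; rw [Complex.Gamma_ofReal, Complex.ofReal_re]
  rw [hfun] at hR
  have h := (aux_key b hb).1
  rw [MellinConvergent] at h
  have h2 : IntegrableOn (fun t : ℝ => ((Real.exp (-t) * t ^ b * Real.log t : ℝ) : ℂ)) (Ioi 0) :=
    h.congr_fun (fun t ht => aux_eqfun b ht) measurableSet_Ioi
  rw [hR.deriv, mellin, setIntegral_congr_fun measurableSet_Ioi (fun t ht => aux_eqfun b ht),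
    ← RCLike.re_to_complex, ← integral_re h2]
  simp only [RCLike.re_to_complex, Complex.ofReal_re]
lemma aux_A (b s : ℝ) (hb : -1 < b) (hs : 0 < s) :
    IntegrableOn (fun t : ℝ => Real.exp (-(s*t)) * t ^ b) (Ioi 0) := by
  have h0 : IntegrableOn (fun x : ℝ => Real.exp (-x) * x ^ b) (Ioi 0) := by
    simpa using Real.GammaIntegral_convergent (show (0:ℝ) < b+1 by linarith)
  have h1 := (integrableOn_Ioi_comp_mul_left_iff
      (fun x : ℝ => Real.exp (-x) * x ^ b) 0 hs).mpr (by simpa using h0)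
  have h2 := h1.const_mul ((s ^ b)⁻¹)
  refine IntegrableOn.congr_fun h2 (fun t ht => ?_) measurableSet_Ioi
  rw [Set.mem_Ioi] at ht
  rw [Real.mul_rpow hs.le ht.le]
  field_simp [(Real.rpow_pos_of_pos hs b).ne']

lemma aux_B (b s : ℝ) (hb : -1 < b) (hs : 0 < s) :
    IntegrableOn (fun t : ℝ => Real.exp (-(s*t)) * t ^ b * Real.log t) (Ioi 0) := by
  have h1 := (integrableOn_Ioi_comp_mul_left_iff
      (fun x : ℝ => Real.exp (-x) * x ^ b * Real.log x) 0 hs).mpr (by simpa using aux_B0 b hb)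
  have h2 := (h1.const_mul ((s ^ b)⁻¹)).sub ((aux_A b s hb hs).const_mul (Real.log s))
  refine IntegrableOn.congr_fun h2 (fun t ht => ?_) measurableSet_Ioi
  rw [Set.mem_Ioi] at ht
  simp only [Pi.sub_apply]
  rw [Real.mul_rpow hs.le ht.le, Real.log_mul hs.ne' ht.ne']
  field_simp [(Real.rpow_pos_of_pos hs b).ne']
  ring

lemma aux_C (b s : ℝ) (hb : -1 < b) (hs : 0 < s) :
    ∫ t in Ioi (0:ℝ), Real.exp (-(s*t)) * t ^ b = (1/s) ^ (b+1) * Real.Gamma (b+1) := by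
  rw [← Real.integral_rpow_mul_exp_neg_mul_Ioi (show (0:ℝ) < b+1 by linarith) hs]
  refine setIntegral_congr_fun measurableSet_Ioi (fun t ht => ?_)
  rw [add_sub_cancel_right, mul_comm]

lemma aux_E (b s : ℝ) (hb : -1 < b) (hs : 0 < s) :
    ∫ t in Ioi (0:ℝ), Real.exp (-(s*t)) * t ^ b * Real.log t
      = (1/s) ^ (b+1) * (deriv Real.Gamma (b+1) - Real.log s * Real.Gamma (b+1)) := by
  have hsub := integral_comp_mul_left_Ioi
      (fun x : ℝ => Real.exp (-x) * x ^ b * Real.log x) 0 hs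
  rw [mul_zero] at hsub
  rw [← aux_D b hb] at hsub
  have hL : ∫ t in Ioi (0:ℝ), Real.exp (-(s*t)) * (s*t) ^ b * Real.log (s*t)
      = (s ^ b * Real.log s) * ((1/s) ^ (b+1) * Real.Gamma (b+1))
        + s ^ b * ∫ t in Ioi (0:ℝ), Real.exp (-(s*t)) * t ^ b * Real.log t := by
    rw [← aux_C b s hb hs, ← integral_const_mul, ← integral_const_mul,
      ← integral_add (((aux_A b s hb hs).const_mul _)) ((aux_B b s hb hs).const_mul _)]
    refine setIntegral_congr_fun measurableSet_Ioi (fun t ht => ?_)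
    rw [Set.mem_Ioi] at ht
    rw [Real.mul_rpow hs.le ht.le, Real.log_mul hs.ne' ht.ne']
    ring
  rw [hL] at hsub
  have hpow : s ^ (b+1) = s ^ b * s := by rw [Real.rpow_add hs, Real.rpow_one]
  have h1s : (1/s) ^ (b+1) = (s ^ (b+1))⁻¹ := by
    rw [one_div, Real.inv_rpow hs.le]
  have hsb : (0:ℝ) < s ^ b := Real.rpow_pos_of_pos hs b
  rw [h1s, hpow] at hsub ⊢
  rw [smul_eq_mul] at hsub
  have hx : s ^ b * s * s ≠ 0 := by positivity
  field_simp at hsub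
  rw [← hsub, add_sub_cancel_left, ← mul_assoc, inv_mul_cancel₀ (by positivity), one_mul]
theorem stmt_12 (b s : ℝ) (hb : -1 < b) (hs : 0 < s) :
    ∫ t in Set.Ioi (0:ℝ), Real.exp (-s * t) *
        (-(t ^ b / Real.Gamma (b + 1)) *
          (Real.log t - deriv Real.Gamma (b + 1) / Real.Gamma (b + 1)))
      = Real.log s / s ^ (b + 1) := by
  have hb1 : (0:ℝ) < b + 1 := by linarith
  have hΓ : Real.Gamma (b+1) ≠ 0 := (Real.Gamma_pos_of_pos hb1).ne'
  have step1 : (∫ t in Set.Ioi (0:ℝ), Real.exp (-s * t) *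
        (-(t ^ b / Real.Gamma (b + 1)) *
          (Real.log t - deriv Real.Gamma (b + 1) / Real.Gamma (b + 1))))
      = ∫ t in Set.Ioi (0:ℝ),
          ((deriv Real.Gamma (b+1) / Real.Gamma (b+1) ^ 2) * (Real.exp (-(s*t)) * t ^ b)
            - (Real.Gamma (b+1))⁻¹ * (Real.exp (-(s*t)) * t ^ b * Real.log t)) := by
    refine setIntegral_congr_fun measurableSet_Ioi (fun t ht => ?_)
    rw [neg_mul]
    field_simp
    ring
  rw [step1, integral_sub ((aux_A b s hb hs).const_mul _) ((aux_B b s hb hs).const_mul _),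
    integral_const_mul, integral_const_mul, aux_C b s hb hs, aux_E b s hb hs]
  have h1s : (1/s:ℝ) ^ (b+1) = (s ^ (b+1))⁻¹ := by rw [one_div, Real.inv_rpow hs.le]
  have hsp : s ^ (b+1) ≠ 0 := (Real.rpow_pos_of_pos hs _).ne'
  rw [h1s]
  field_simp
  ring
end

section
/- For s > 0, ∫₀^∞ e^(−s t) · (−ln t − γ) dt = ln(s)/s, where γ is the Euler–Mascheroni constant. -/
open MeasureTheory Real Set Filter Asymptotics
open scoped Topology

private lemma integral_cpow_exp_log :
    (∫ t : ℝ in Set.Ioi (0:ℝ), (t:ℂ) ^ ((1:ℂ) - 1) * (Real.log t * Real.exp (-t)))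
      = -(Real.eulerMascheroniConstant : ℂ) := by
  have h1 := Complex.hasDerivAt_GammaIntegral (s := 1) (by norm_num)
  have heq : Complex.Gamma =ᶠ[nhds (1:ℂ)] Complex.GammaIntegral := by
    filter_upwards [(isOpen_lt continuous_const Complex.continuous_re).mem_nhds
      (by norm_num : (0:ℝ) < (1:ℂ).re)] with z hz
    exact Complex.Gamma_eq_integral hz
  have h2 : HasDerivAt Complex.GammaIntegral (-(Real.eulerMascheroniConstant : ℂ)) 1 := by
    simpa using Complex.hasDerivAt_Gamma_one.congr_of_eventuallyEq heq.symm
  exact h1.unique h2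

private lemma integral_exp_neg_log :
    (∫ t in Set.Ioi (0:ℝ), Real.exp (-t) * Real.log t) = -Real.eulerMascheroniConstant := by
  have h := integral_cpow_exp_log
  simp only [sub_self, Complex.cpow_zero, one_mul] at h
  have : (∫ t : ℝ in Set.Ioi (0:ℝ), ((Real.log t * Real.exp (-t) : ℝ) : ℂ))
      = ((∫ t in Set.Ioi (0:ℝ), Real.log t * Real.exp (-t) : ℝ) : ℂ) := integral_ofReal
  rw [show (fun t : ℝ => (Real.log t : ℂ) * (Real.exp (-t) : ℂ))
      = fun t : ℝ => ((Real.log t * Real.exp (-t) : ℝ) : ℂ) by push_cast; rfl, this] at h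
  have h' : (∫ t in Set.Ioi (0:ℝ), Real.log t * Real.exp (-t)) = -Real.eulerMascheroniConstant := by
    exact_mod_cast h
  rw [← h']
  simp_rw [mul_comm]

private lemma integrable_exp_neg_log :
    IntegrableOn (fun t : ℝ => Real.exp (-t) * Real.log t) (Set.Ioi 0) := by
  have h0 : MellinConvergent (fun t : ℝ => Real.log t • (Real.exp (-t) : ℂ)) 1 := by
    refine (mellin_hasDerivAt_of_isBigO_rpow (E := ℂ) (a := 2) (b := 0) ?_ ?_
      (by norm_num) ?_ (by norm_num)).1
    · refine (Continuous.continuousOn ?_).locallyIntegrableOn measurableSet_Ioi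
      exact Complex.continuous_ofReal.comp (Real.continuous_exp.comp continuous_neg)
    · rw [← isBigO_norm_left]
      simp_rw [Complex.norm_real, isBigO_norm_left]
      simpa only [neg_one_mul] using (isLittleO_exp_neg_mul_rpow_atTop zero_lt_one _).isBigO
    · simp_rw [neg_zero, rpow_zero]
      refine isBigO_const_of_tendsto (?_ : Tendsto _ _ (nhds (1 : ℂ))) one_ne_zero
      rw [(by simp : (1 : ℂ) = Real.exp (-0))]
      exact (Complex.continuous_ofReal.comp
        (Real.continuous_exp.comp continuous_neg)).continuousWithinAt
  have h1 : IntegrableOn (fun t : ℝ => ((Real.log t * Real.exp (-t) : ℝ) : ℂ)) (Set.Ioi 0) := by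
    have := h0
    unfold MellinConvergent at this
    simpa [sub_self, Complex.cpow_zero, Complex.real_smul, Complex.ofReal_mul] using this
  have h2 := h1.re
  have heq : (fun x : ℝ => RCLike.re ((Real.log x * Real.exp (-x) : ℝ) : ℂ))
      = fun t : ℝ => Real.exp (-t) * Real.log t := by
    funext t
    rw [show ((Real.log t * Real.exp (-t) : ℝ) : ℂ) = RCLike.ofReal (Real.log t * Real.exp (-t)) from rfl,
      RCLike.ofReal_re, mul_comm]
  exact heq ▸ h2

theorem stmt_13 (s : ℝ) (hs : 0 < s) :
    ∫ t in Set.Ioi (0:ℝ), Real.exp (-s * t) * (-Real.log t - Real.eulerMascheroniConstant)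
      = Real.log s / s := by
  set γ := Real.eulerMascheroniConstant with hγ
  set g : ℝ → ℝ := fun u => Real.exp (-u) * (Real.log s - Real.log u - γ) with hg
  have hcongr : ∀ t ∈ Set.Ioi (0:ℝ),
      Real.exp (-s * t) * (-Real.log t - γ) = g (s * t) := by
    intro t ht
    simp only [hg]
    rw [Real.log_mul hs.ne' (ne_of_gt ht), neg_mul]
    ring
  rw [setIntegral_congr_fun measurableSet_Ioi hcongr]
  rw [integral_comp_mul_left_Ioi g 0 hs, mul_zero]
  have hintlog := integrable_exp_neg_log
  have hintexp : IntegrableOn (fun u : ℝ => Real.exp (-u) * (Real.log s - γ)) (Set.Ioi 0) := by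
    have := (exp_neg_integrableOn_Ioi 0 one_pos).mul_const (Real.log s - γ)
    simp only [neg_one_mul] at this
    exact this
  have hgval : (∫ u in Set.Ioi (0:ℝ), g u) = Real.log s := by
    have hsplit : ∀ u : ℝ, g u
        = Real.exp (-u) * (Real.log s - γ) - Real.exp (-u) * Real.log u := by
      intro u; simp only [hg]; ring
    simp_rw [hsplit]
    rw [MeasureTheory.integral_sub hintexp hintlog, integral_exp_neg_log,
      MeasureTheory.integral_mul_const, integral_exp_neg_Ioi_zero]
    ring
  rw [hgval, smul_eq_mul, inv_mul_eq_div]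
end

section
/- Differentiating in the parameter b: for a > 0, b > 0, s > 1, and continuous compactly supported F on [0,∞), ∫₀^∞ e^(−s t) · (∫₀^∞ F(u) · t^(a u + b) / Γ(a u + b + 1) · (ln t − Γ'(a u + b + 1)/Γ(a u + b + 1)) du) dt = − ln(s) · f(a·ln s) / s^(b+1), where f(w) = ∫₀^∞ e^(−w u) F(u) du. -/
open MeasureTheory Real Set


lemma abs_log_le {t : ℝ} (ht : 0 < t) : |Real.log t| ≤ t + t⁻¹ := by
  rcases le_or_gt 1 t with h | h
  · rw [abs_of_nonneg (Real.log_nonneg h)]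
    have := Real.log_le_sub_one_of_pos ht
    have : Real.log t ≤ t := by linarith
    have : 0 ≤ t⁻¹ := by positivity
    linarith
  · rw [abs_of_nonpos (Real.log_nonpos ht.le h.le), ← Real.log_inv]
    have hi : 0 < t⁻¹ := by positivity
    have := Real.log_le_sub_one_of_pos hi
    linarith

lemma int_rpow_exp {p r : ℝ} (hp : -1 < p) (hr : 0 < r) :
    IntegrableOn (fun t => t ^ p * Real.exp (-(r * t))) (Set.Ioi 0) := by
  have := integrableOn_rpow_mul_exp_neg_mul_rpow hp zero_lt_one hr
  simpa [Real.rpow_one] using this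

lemma val_rpow_exp {c r : ℝ} (hc : -1 < c) (hr : 0 < r) :
    ∫ t in Set.Ioi (0:ℝ), t ^ c * Real.exp (-(r * t)) = (1/r) ^ (c+1) * Real.Gamma (c+1) := by
  have := integral_rpow_mul_exp_neg_mul_Ioi (a := c+1) (r := r) (by linarith) hr
  simpa using this


lemma rpow_le_two {t x c : ℝ} (ht : 0 < t) (h1 : c/2 ≤ x) (h2 : x ≤ 3*c/2) :
    t ^ x ≤ t ^ (c/2) + t ^ (3*c/2) := by
  rcases le_or_gt t 1 with h | h
  · have := Real.rpow_le_rpow_of_exponent_ge ht h h1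
    have : (0:ℝ) ≤ t ^ (3*c/2) := by positivity
    linarith [Real.rpow_le_rpow_of_exponent_ge ht h h1]
  · have := Real.rpow_le_rpow_of_exponent_le h.le h2
    have : (0:ℝ) ≤ t ^ (c/2) := by positivity
    linarith [Real.rpow_le_rpow_of_exponent_le h.le h2]

lemma key_log_integral {s : ℝ} (hs : 0 < s) {c : ℝ} (hc : 0 < c) :
    ∫ t in Set.Ioi (0:ℝ), t ^ c * Real.log t * Real.exp (-(s * t)) =
      ((1/s) ^ (c+1) * Real.log (1/s)) * Real.Gamma (c+1)
        + (1/s) ^ (c+1) * deriv Real.Gamma (c+1) := by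
  have hmeas : ∀ x : ℝ, AEStronglyMeasurable (fun t : ℝ => t ^ x * Real.exp (-(s * t)))
      (volume.restrict (Set.Ioi 0)) := by
    intro x
    refine (ContinuousOn.mul ?_ (Continuous.continuousOn (by continuity))).aestronglyMeasurable
      measurableSet_Ioi
    exact fun t ht => (Real.continuousAt_rpow_const t x (Or.inl (ne_of_gt ht))).continuousWithinAt
  have hA : HasDerivAt (fun x : ℝ => ∫ t in Set.Ioi (0:ℝ), t ^ x * Real.exp (-(s * t)))
      (∫ t in Set.Ioi (0:ℝ), t ^ c * Real.log t * Real.exp (-(s * t))) c := by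
    have hε : (0:ℝ) < c/2 := by linarith
    refine (hasDerivAt_integral_of_dominated_loc_of_deriv_le (F := fun x t => t ^ x * Real.exp (-(s*t)))
      (F' := fun x t => t ^ x * Real.log t * Real.exp (-(s*t)))
      (bound := fun t => (t ^ (c/2+1) + t ^ (c/2-1) + t ^ (3*c/2+1) + t ^ (3*c/2-1)) * Real.exp (-(s*t)))
      (Metric.ball_mem_nhds c hε) (Filter.Eventually.of_forall hmeas) (int_rpow_exp (by linarith) hs)
      ?_ ?_ ?_ ?_).2
    · refine (ContinuousOn.mul (ContinuousOn.mul ?_ ?_)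
        (Continuous.continuousOn (by continuity))).aestronglyMeasurable measurableSet_Ioi
      · exact fun t ht =>
          (Real.continuousAt_rpow_const t c (Or.inl (ne_of_gt ht))).continuousWithinAt
      · exact fun t ht => (Real.continuousAt_log (ne_of_gt ht)).continuousWithinAt
    · filter_upwards [self_mem_ae_restrict measurableSet_Ioi] with t ht x hx
      have ht0 : (0:ℝ) < t := ht
      have hx' : c/2 ≤ x ∧ x ≤ 3*c/2 := by
        rw [Metric.mem_ball, Real.dist_eq, abs_sub_lt_iff] at hx
        constructor <;> linarith [hx.1, hx.2]
      have h1 : t ^ x * |Real.log t| ≤ (t ^ (c/2) + t ^ (3*c/2)) * (t + t⁻¹) := by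
        refine mul_le_mul (rpow_le_two ht0 hx'.1 hx'.2) (abs_log_le ht0) (abs_nonneg _) (by positivity)
      have h2 : (t ^ (c/2) + t ^ (3*c/2)) * (t + t⁻¹)
          = t ^ (c/2+1) + t ^ (c/2-1) + t ^ (3*c/2+1) + t ^ (3*c/2-1) := by
        rw [Real.rpow_add_one ht0.ne', Real.rpow_add_one ht0.ne',
          Real.rpow_sub_one ht0.ne', Real.rpow_sub_one ht0.ne']
        field_simp
        ring
      have he : (0:ℝ) < Real.exp (-(s*t)) := Real.exp_pos _
      calc ‖t ^ x * Real.log t * Real.exp (-(s*t))‖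
          = t ^ x * |Real.log t| * Real.exp (-(s*t)) := by
            rw [norm_mul, norm_mul, Real.norm_eq_abs, Real.norm_eq_abs, Real.norm_eq_abs,
              abs_of_nonneg (Real.rpow_nonneg ht0.le _), abs_of_nonneg he.le]
        _ ≤ (t ^ (c/2+1) + t ^ (c/2-1) + t ^ (3*c/2+1) + t ^ (3*c/2-1)) * Real.exp (-(s*t)) := by
            rw [← h2]; exact mul_le_mul_of_nonneg_right h1 he.le
    · have i1 := int_rpow_exp (p := c/2+1) (by linarith) hs
      have i2 := int_rpow_exp (p := c/2-1) (by linarith) hs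
      have i3 := int_rpow_exp (p := 3*c/2+1) (by linarith) hs
      have i4 := int_rpow_exp (p := 3*c/2-1) (by linarith) hs
      have := ((i1.add i2).add i3).add i4
      refine this.congr (Filter.Eventually.of_forall fun t => by simp only [Pi.add_apply]; ring)
    · filter_upwards [self_mem_ae_restrict measurableSet_Ioi] with t ht x hx
      have ht0 : (0:ℝ) < t := ht
      have := ((Real.hasStrictDerivAt_const_rpow ht0 x).hasDerivAt).mul_const (Real.exp (-(s*t)))
      simpa [mul_comm, mul_assoc, mul_left_comm] using this
  have hΓ : ∀ x : ℝ, 0 < x → ∀ m : ℕ, x ≠ -m := by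
    intro x hx m
    have : -(m:ℝ) ≤ 0 := neg_nonpos.mpr (Nat.cast_nonneg m)
    intro h; rw [h] at hx; linarith
  have h1 : HasDerivAt (fun x : ℝ => (1/s) ^ (x+1)) ((1/s) ^ (c+1) * Real.log (1/s)) c := by
    have := ((Real.hasStrictDerivAt_const_rpow (by positivity : (0:ℝ) < 1/s) (c+1)).hasDerivAt).comp c
      ((hasDerivAt_id c).add_const 1)
    simpa [Function.comp_def] using this
  have h2 : HasDerivAt (fun x : ℝ => Real.Gamma (x+1)) (deriv Real.Gamma (c+1)) c := by
    have := ((Real.differentiableAt_Gamma (hΓ (c+1) (by linarith))).hasDerivAt).comp c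
      ((hasDerivAt_id c).add_const 1)
    simpa [Function.comp_def] using this
  have hB : HasDerivAt (fun x : ℝ => (1/s) ^ (x+1) * Real.Gamma (x+1))
      (((1/s) ^ (c+1) * Real.log (1/s)) * Real.Gamma (c+1)
        + (1/s) ^ (c+1) * deriv Real.Gamma (c+1)) c := h1.mul h2
  have hEq : (fun x : ℝ => ∫ t in Set.Ioi (0:ℝ), t ^ x * Real.exp (-(s * t)))
      =ᶠ[nhds c] fun x => (1/s) ^ (x+1) * Real.Gamma (x+1) := by
    filter_upwards [Ioi_mem_nhds (show (-1:ℝ) < c by linarith)] with x hx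
    exact val_rpow_exp hx hs
  exact ((hB.congr_of_eventuallyEq hEq).unique hA).symm


lemma contOn_derivGamma : ContinuousOn (deriv Real.Gamma) (Set.Ioi 0) := by
  have hS : IsOpen {z : ℂ | 0 < z.re} := isOpen_lt continuous_const Complex.continuous_re
  have hne : ∀ z : ℂ, 0 < z.re → ∀ m : ℕ, z ≠ -(m:ℂ) := by
    intro z hz m h
    rw [h] at hz
    simp only [Complex.neg_re, Complex.natCast_re] at hz
    have : (0:ℝ) ≤ (m:ℝ) := Nat.cast_nonneg m
    linarith
  have hd : DifferentiableOn ℂ Complex.Gamma {z : ℂ | 0 < z.re} := fun z hz =>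
    (Complex.differentiableAt_Gamma z (hne z hz)).differentiableWithinAt
  have hcont : ContinuousOn (deriv Complex.Gamma) {z : ℂ | 0 < z.re} :=
    ((hd.analyticOnNhd hS).deriv).continuousOn
  have heq : ∀ x : ℝ, 0 < x → deriv Real.Gamma x = (deriv Complex.Gamma x).re := by
    intro x hx
    have h1 : HasDerivAt Complex.Gamma (deriv Complex.Gamma x) x :=
      (Complex.differentiableAt_Gamma x (hne x (by simpa using hx))).hasDerivAt
    have h2 := h1.real_of_complex
    have h3 : (fun y : ℝ => (Complex.Gamma (y:ℂ)).re) = Real.Gamma := by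
      funext y
      rw [Complex.Gamma_ofReal, Complex.ofReal_re]
    rw [h3] at h2
    exact h2.deriv
  refine ContinuousOn.congr ?_ (fun x hx => heq x hx)
  have : ContinuousOn (fun x : ℝ => deriv Complex.Gamma (x:ℂ)) (Set.Ioi 0) :=
    hcont.comp Complex.continuous_ofReal.continuousOn (fun x hx => by simpa using (hx : (0:ℝ) < x))
  exact Complex.continuous_re.comp_continuousOn this

lemma int_rpow_log_exp {c r : ℝ} (hc : 0 < c) (hr : 0 < r) :
    IntegrableOn (fun t => t ^ c * Real.log t * Real.exp (-(r * t))) (Set.Ioi 0) := by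
  have hb := (int_rpow_exp (p := c+1) (by linarith) hr).add (int_rpow_exp (p := c-1) (by linarith) hr)
  refine Integrable.mono' (g := fun t => (t ^ (c+1) + t ^ (c-1)) * Real.exp (-(r * t)))
    (hb.congr (Filter.Eventually.of_forall fun t => by simp only [Pi.add_apply]; ring)) ?_ ?_
  · refine (ContinuousOn.mul (ContinuousOn.mul ?_ ?_)
      (Continuous.continuousOn (by continuity))).aestronglyMeasurable measurableSet_Ioi
    · exact fun t ht => (Real.continuousAt_rpow_const t c (Or.inl (ne_of_gt ht))).continuousWithinAt
    · exact fun t ht => (Real.continuousAt_log (ne_of_gt ht)).continuousWithinAt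
  · filter_upwards [self_mem_ae_restrict measurableSet_Ioi] with t ht
    have ht0 : (0:ℝ) < t := ht
    have he : (0:ℝ) < Real.exp (-(r*t)) := Real.exp_pos _
    have h1 : t ^ c * |Real.log t| ≤ t ^ c * (t + t⁻¹) :=
      mul_le_mul_of_nonneg_left (abs_log_le ht0) (Real.rpow_nonneg ht0.le _)
    have h2 : t ^ c * (t + t⁻¹) = t ^ (c+1) + t ^ (c-1) := by
      rw [Real.rpow_add_one ht0.ne', Real.rpow_sub_one ht0.ne']
      ring
    calc ‖t ^ c * Real.log t * Real.exp (-(r*t))‖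
        = t ^ c * |Real.log t| * Real.exp (-(r*t)) := by
          rw [norm_mul, norm_mul, Real.norm_eq_abs, Real.norm_eq_abs, Real.norm_eq_abs,
            abs_of_nonneg (Real.rpow_nonneg ht0.le _), abs_of_nonneg he.le]
      _ ≤ (t ^ (c+1) + t ^ (c-1)) * Real.exp (-(r*t)) := by
          rw [← h2]; exact mul_le_mul_of_nonneg_right h1 he.le

lemma inner_val {s : ℝ} (hs : 1 < s) {c : ℝ} (hc : 0 < c) :
    ∫ t in Set.Ioi (0:ℝ), Real.exp (-(s*t)) *
        (t ^ c / Real.Gamma (c+1) * (Real.log t - deriv Real.Gamma (c+1) / Real.Gamma (c+1)))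
      = -Real.log s * (1/s) ^ (c+1) := by
  have hs0 : (0:ℝ) < s := by linarith
  have hΓ : (0:ℝ) < Real.Gamma (c+1) := Real.Gamma_pos_of_pos (by linarith)
  set Γc := Real.Gamma (c+1)
  set D := deriv Real.Gamma (c+1)
  have hpt : ∀ t : ℝ, Real.exp (-(s*t)) * (t ^ c / Γc * (Real.log t - D / Γc))
      = Γc⁻¹ * (t ^ c * Real.log t * Real.exp (-(s*t)))
        - (D / Γc^2) * (t ^ c * Real.exp (-(s*t))) := by
    intro t
    field_simp
  rw [show (fun t : ℝ => Real.exp (-(s*t)) * (t ^ c / Γc * (Real.log t - D / Γc)))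
      = fun t => Γc⁻¹ * (t ^ c * Real.log t * Real.exp (-(s*t)))
        - (D / Γc^2) * (t ^ c * Real.exp (-(s*t))) from funext hpt]
  rw [integral_sub ((int_rpow_log_exp hc hs0).const_mul _) ((int_rpow_exp (by linarith) hs0).const_mul _),
    integral_const_mul, integral_const_mul, key_log_integral hs0 hc, val_rpow_exp (by linarith) hs0]
  rw [show Real.log (1/s) = -Real.log s by rw [one_div, Real.log_inv]]
  field_simp
  ring


lemma rpow_le_add {t x p q : ℝ} (ht : 0 < t) (h1 : p ≤ x) (h2 : x ≤ q) :
    t ^ x ≤ t ^ p + t ^ q := by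
  rcases le_or_gt t 1 with h | h
  · have h3 := Real.rpow_le_rpow_of_exponent_ge ht h h1
    have h4 : (0:ℝ) ≤ t ^ q := by positivity
    linarith
  · have h3 := Real.rpow_le_rpow_of_exponent_le h.le h2
    have h4 : (0:ℝ) ≤ t ^ p := by positivity
    linarith

lemma hGammaNe : ∀ x : ℝ, 0 < x → ∀ m : ℕ, x ≠ -m := by
  intro x hx m h
  have : -(m:ℝ) ≤ 0 := neg_nonpos.mpr (Nat.cast_nonneg m)
  rw [h] at hx; linarith

theorem stmt_17 (F : ℝ → ℝ) (hF : Continuous F) (hsupp : HasCompactSupport F)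
    (hpos : Function.support F ⊆ Set.Ici 0) (a b s : ℝ) (ha : 0 < a) (hb : 0 < b)
    (hs : 1 < s) :
    ∫ t in Set.Ioi (0:ℝ), Real.exp (-s * t) *
        (∫ u in Set.Ioi (0:ℝ), F u * t ^ (a * u + b) / Real.Gamma (a * u + b + 1) *
          (Real.log t - deriv Real.Gamma (a * u + b + 1) / Real.Gamma (a * u + b + 1)))
      = -(Real.log s * (∫ u in Set.Ioi (0:ℝ), Real.exp (-(a * Real.log s) * u) * F u)
          / s ^ (b + 1)) := by
  have hs0 : (0:ℝ) < s := by linarith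
  obtain ⟨R0, hR0⟩ := hsupp.isBounded.subset_closedBall 0
  set R : ℝ := max R0 0 with hRdef
  have hR0R : Metric.closedBall (0:ℝ) R0 ⊆ Metric.closedBall 0 R :=
    Metric.closedBall_subset_closedBall (le_max_left _ _)
  have hRnn : (0:ℝ) ≤ R := le_max_right _ _
  have hR : tsupport F ⊆ Set.Icc (-R) R := by
    refine (hR0.trans hR0R).trans ?_
    rw [Real.closedBall_eq_Icc]; simp
  have hFzero : ∀ u : ℝ, R < u → F u = 0 := by
    intro u hu
    refine image_eq_zero_of_notMem_tsupport fun hmem => ?_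
    have := hR hmem
    rw [Set.mem_Icc] at this
    linarith [this.2]
  obtain ⟨M1, hM1⟩ := hsupp.exists_bound_of_continuous hF
  have hM1nn : 0 ≤ M1 := le_trans (norm_nonneg (F 0)) (hM1 0)
  -- Gamma positivity on the relevant range
  have hargpos : ∀ u : ℝ, 0 ≤ u → 0 < a * u + b + 1 := by
    intro u hu; nlinarith
  have hΓpos : ∀ u : ℝ, 0 ≤ u → 0 < Real.Gamma (a * u + b + 1) := fun u hu =>
    Real.Gamma_pos_of_pos (hargpos u hu)
  -- continuity on Icc 0 R
  have haff : Continuous fun u : ℝ => a * u + b + 1 :=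
    ((continuous_const.mul continuous_id).add continuous_const).add continuous_const
  have hcΓ : ContinuousOn (fun u : ℝ => Real.Gamma (a * u + b + 1)) (Set.Icc 0 R) := by
    intro u hu
    have h0 : ContinuousAt (Real.Gamma ∘ fun u : ℝ => a * u + b + 1) u :=
      ContinuousAt.comp ((Real.differentiableAt_Gamma (hGammaNe _ (hargpos u hu.1))).continuousAt)
        haff.continuousAt
    exact h0.continuousWithinAt
  have hcΓinv : ContinuousOn (fun u : ℝ => (Real.Gamma (a * u + b + 1))⁻¹) (Set.Icc 0 R) :=
    hcΓ.inv₀ fun u hu => (hΓpos u hu.1).ne'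
  have hcD : ContinuousOn (fun u : ℝ => deriv Real.Gamma (a * u + b + 1)) (Set.Icc 0 R) :=
    contOn_derivGamma.comp haff.continuousOn fun u hu => Set.mem_Ioi.mpr (hargpos u hu.1)
  obtain ⟨M2, hM2⟩ := isCompact_Icc.exists_bound_of_continuousOn hcΓinv
  obtain ⟨M3, hM3⟩ := isCompact_Icc.exists_bound_of_continuousOn hcD
  have hM2nn : 0 ≤ M2 := le_trans (norm_nonneg _) (hM2 0 (Set.mem_Icc.mpr ⟨le_refl 0, hRnn⟩))
  have hM3nn : 0 ≤ M3 := le_trans (norm_nonneg _) (hM3 0 (Set.mem_Icc.mpr ⟨le_refl 0, hRnn⟩))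
  set C : ℝ := M1 * M2 * max 1 (M2 * M3) with hCdef
  have hCnn : 0 ≤ C := by positivity
  set B : ℝ → ℝ := fun t => (t ^ b + t ^ (a * R + b)) * (t + t⁻¹ + 1) * Real.exp (-(s * t))
    with hBdef
  have haRb : (0:ℝ) < a * R + b := by nlinarith
  have hBint : IntegrableOn B (Set.Ioi 0) := by
    have i1 := int_rpow_exp (p := b + 1) (by linarith) hs0
    have i2 := int_rpow_exp (p := b - 1) (by linarith) hs0
    have i3 := int_rpow_exp (p := b) (by linarith) hs0
    have i4 := int_rpow_exp (p := a * R + b + 1) (by linarith) hs0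
    have i5 := int_rpow_exp (p := a * R + b - 1) (by linarith) hs0
    have i6 := int_rpow_exp (p := a * R + b) (by linarith) hs0
    have hsum := ((((i1.add i2).add i3).add i4).add i5).add i6
    refine hsum.congr ?_
    filter_upwards [self_mem_ae_restrict measurableSet_Ioi] with t ht
    have ht0 : (0:ℝ) < t := ht
    simp only [Pi.add_apply, hBdef]
    rw [Real.rpow_add_one ht0.ne', Real.rpow_sub_one ht0.ne',
      Real.rpow_add_one ht0.ne', Real.rpow_sub_one ht0.ne']
    field_simp
    ring
  set H : ℝ → ℝ → ℝ := fun t u => Real.exp (-(s * t)) *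
      (F u * t ^ (a * u + b) / Real.Gamma (a * u + b + 1) *
        (Real.log t - deriv Real.Gamma (a * u + b + 1) / Real.Gamma (a * u + b + 1))) with hHdef
  -- measurability on the product
  have hSmeas : MeasurableSet (Set.Ioi (0:ℝ) ×ˢ Set.Ioi (0:ℝ)) :=
    measurableSet_Ioi.prod measurableSet_Ioi
  have hprodcont : ContinuousOn (Function.uncurry H) (Set.Ioi (0:ℝ) ×ˢ Set.Ioi (0:ℝ)) := by
    have hargpos' : ∀ p : ℝ × ℝ, p ∈ Set.Ioi (0:ℝ) ×ˢ Set.Ioi (0:ℝ) → 0 < a * p.2 + b + 1 :=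
      fun p hp => hargpos p.2 (le_of_lt hp.2)
    have cexp : Continuous fun p : ℝ × ℝ => Real.exp (-(s * p.1)) :=
      Real.continuous_exp.comp (continuous_const.mul continuous_fst).neg
    have cF : Continuous fun p : ℝ × ℝ => F p.2 := hF.comp continuous_snd
    have caff : Continuous fun p : ℝ × ℝ => a * p.2 + b + 1 :=
      ((continuous_const.mul continuous_snd).add continuous_const).add continuous_const
    have crpow : ContinuousOn (fun p : ℝ × ℝ => p.1 ^ (a * p.2 + b))
        (Set.Ioi (0:ℝ) ×ˢ Set.Ioi (0:ℝ)) := by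
      intro p hp
      have hp1 : (0:ℝ) < p.1 := hp.1
      have h1 : ContinuousAt (fun q : ℝ × ℝ => q.1 ^ q.2) (p.1, a * p.2 + b) :=
        Real.continuousAt_rpow (p.1, a * p.2 + b) (Or.inl hp1.ne')
      have h2 : ContinuousAt ((fun q : ℝ × ℝ => q.1 ^ q.2) ∘ fun p : ℝ × ℝ => (p.1, a * p.2 + b)) p :=
        ContinuousAt.comp (g := fun q : ℝ × ℝ => q.1 ^ q.2)
          (f := fun p : ℝ × ℝ => (p.1, a * p.2 + b)) (x := p) h1
          ((continuous_fst.prodMk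
            ((continuous_const.mul continuous_snd).add continuous_const)).continuousAt)
      exact h2.continuousWithinAt
    have cΓ : ContinuousOn (fun p : ℝ × ℝ => Real.Gamma (a * p.2 + b + 1))
        (Set.Ioi (0:ℝ) ×ˢ Set.Ioi (0:ℝ)) := by
      intro p hp
      have h0 : ContinuousAt (Real.Gamma ∘ fun p : ℝ × ℝ => a * p.2 + b + 1) p :=
        ContinuousAt.comp ((Real.differentiableAt_Gamma (hGammaNe _ (hargpos' p hp))).continuousAt)
          caff.continuousAt
      exact h0.continuousWithinAt
    have cΓne : ∀ p ∈ Set.Ioi (0:ℝ) ×ˢ Set.Ioi (0:ℝ), Real.Gamma (a * p.2 + b + 1) ≠ 0 :=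
      fun p hp => (Real.Gamma_pos_of_pos (hargpos' p hp)).ne'
    have clog : ContinuousOn (fun p : ℝ × ℝ => Real.log p.1)
        (Set.Ioi (0:ℝ) ×ˢ Set.Ioi (0:ℝ)) := fun p hp =>
      ((Real.continuousAt_log (ne_of_gt hp.1)).comp continuous_fst.continuousAt).continuousWithinAt
    have cD : ContinuousOn (fun p : ℝ × ℝ => deriv Real.Gamma (a * p.2 + b + 1))
        (Set.Ioi (0:ℝ) ×ˢ Set.Ioi (0:ℝ)) :=
      contOn_derivGamma.comp caff.continuousOn fun p hp => Set.mem_Ioi.mpr (hargpos' p hp)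
    exact cexp.continuousOn.mul
      ((((cF.continuousOn.mul crpow).div cΓ cΓne)).mul (clog.sub (cD.div cΓ cΓne)))
  have hunc : AEStronglyMeasurable (Function.uncurry H)
      ((volume.restrict (Set.Ioi 0)).prod (volume.restrict (Set.Ioi 0))) := by
    rw [Measure.prod_restrict]
    exact hprodcont.aestronglyMeasurable hSmeas
  -- integrability on the product
  have hindint : Integrable (Set.indicator (Set.Icc 0 R) fun _ => C)
      (volume.restrict (Set.Ioi 0)) := by
    rw [integrable_indicator_iff measurableSet_Icc]
    refine (integrableOn_const_iff (C := C)).mpr (Or.inr ?_)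
    calc (volume.restrict (Set.Ioi 0)) (Set.Icc 0 R) ≤ volume (Set.Icc 0 R) :=
          Measure.restrict_le_self _
      _ < ⊤ := by rw [Real.volume_Icc]; exact ENNReal.ofReal_lt_top
  have hHint : Integrable (Function.uncurry H)
      ((volume.restrict (Set.Ioi 0)).prod (volume.restrict (Set.Ioi 0))) := by
    refine Integrable.mono'
      (g := fun p : ℝ × ℝ => B p.1 * Set.indicator (Set.Icc 0 R) (fun _ => C) p.2)
      (hBint.mul_prod hindint) hunc ?_
    rw [Measure.prod_restrict]
    filter_upwards [self_mem_ae_restrict hSmeas] with p hp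
    have ht0 : (0:ℝ) < p.1 := hp.1
    have hu0 : (0:ℝ) < p.2 := hp.2
    set t := p.1
    set u := p.2
    have hBpos : 0 ≤ B t := by
      have : (0:ℝ) ≤ t⁻¹ := by positivity
      have h1 : (0:ℝ) ≤ t ^ b := by positivity
      have h2 : (0:ℝ) ≤ t ^ (a*R+b) := by positivity
      have : (0:ℝ) ≤ Real.exp (-(s*t)) := (Real.exp_pos _).le
      simp only [hBdef]
      positivity
    rcases le_or_gt u R with huR | huR
    · have huI : u ∈ Set.Icc 0 R := Set.mem_Icc.mpr ⟨hu0.le, huR⟩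
      rw [Set.indicator_of_mem huI]
      have hΓ := hΓpos u hu0.le
      set Γv := Real.Gamma (a * u + b + 1)
      set Dv := deriv Real.Gamma (a * u + b + 1)
      have hFb : |F u| ≤ M1 := by simpa [Real.norm_eq_abs] using hM1 u
      have hΓib : Γv⁻¹ ≤ M2 := by
        have := hM2 u huI
        rw [Real.norm_eq_abs, abs_of_pos (by positivity)] at this
        exact this
      have hDb : |Dv| ≤ M3 := by simpa [Real.norm_eq_abs] using hM3 u huI
      have hpow : t ^ (a * u + b) ≤ t ^ b + t ^ (a * R + b) := by
        refine rpow_le_add ht0 (by nlinarith) (by nlinarith)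
      have hlog : |Real.log t - Dv / Γv| ≤ (t + t⁻¹) + M2 * M3 := by
        have h1 : |Real.log t - Dv / Γv| ≤ |Real.log t| + |Dv / Γv| := abs_sub _ _
        have h2 : |Real.log t| ≤ t + t⁻¹ := by
          rcases le_or_gt 1 t with h | h
          · rw [abs_of_nonneg (Real.log_nonneg h)]
            have := Real.log_le_sub_one_of_pos ht0
            have h4 : (0:ℝ) ≤ t⁻¹ := by positivity
            linarith
          · rw [abs_of_nonpos (Real.log_nonpos ht0.le h.le), ← Real.log_inv]
            have hi : (0:ℝ) < t⁻¹ := by positivity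
            have := Real.log_le_sub_one_of_pos hi
            linarith
        have h3 : |Dv / Γv| ≤ M2 * M3 := by
          rw [abs_div, abs_of_pos hΓ, div_eq_mul_inv, mul_comm]
          exact mul_le_mul hΓib hDb (abs_nonneg _) hM2nn
        linarith
      have hmax : (t + t⁻¹) + M2 * M3 ≤ max 1 (M2 * M3) * (t + t⁻¹ + 1) := by
        have hmx1 : (1:ℝ) ≤ max 1 (M2*M3) := le_max_left _ _
        have hmx2 : M2 * M3 ≤ max 1 (M2*M3) := le_max_right _ _
        have htt : (0:ℝ) ≤ t + t⁻¹ := by positivity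
        nlinarith
      have hnorm : ‖H t u‖ = Real.exp (-(s*t)) * (|F u| * t ^ (a*u+b) * Γv⁻¹
          * |Real.log t - Dv / Γv|) := by
        simp only [hHdef, Real.norm_eq_abs, abs_mul, abs_div,
          abs_of_pos (Real.exp_pos (-(s*t))), abs_of_pos hΓ,
          abs_of_nonneg (Real.rpow_nonneg ht0.le (a*u+b))]
        field_simp
        simp only [Γv, Dv]
        rw [abs_of_pos (hΓpos u hu0.le)]
        ring
      change ‖H t u‖ ≤ B t * C
      rw [hnorm]
      have step1 : |F u| * t ^ (a*u+b) * Γv⁻¹ * |Real.log t - Dv / Γv|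
          ≤ M1 * (t ^ b + t ^ (a*R+b)) * M2 * ((t + t⁻¹) + M2 * M3) := by
        have e1 : |F u| * t ^ (a*u+b) ≤ M1 * (t ^ b + t ^ (a*R+b)) :=
          mul_le_mul hFb hpow (Real.rpow_nonneg ht0.le _) hM1nn
        have e2 : |F u| * t ^ (a*u+b) * Γv⁻¹ ≤ M1 * (t ^ b + t ^ (a*R+b)) * M2 :=
          mul_le_mul e1 hΓib (by positivity) (by positivity)
        exact mul_le_mul e2 hlog (abs_nonneg _) (by positivity)
      have step2 : M1 * (t ^ b + t ^ (a*R+b)) * M2 * ((t + t⁻¹) + M2 * M3)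
          ≤ (t ^ b + t ^ (a*R+b)) * (t + t⁻¹ + 1) * C := by
        rw [hCdef]
        have h5 : (0:ℝ) ≤ M1 * (t ^ b + t ^ (a*R+b)) * M2 := by positivity
        have := mul_le_mul_of_nonneg_left hmax h5
        calc M1 * (t ^ b + t ^ (a*R+b)) * M2 * ((t + t⁻¹) + M2 * M3)
            ≤ M1 * (t ^ b + t ^ (a*R+b)) * M2 * (max 1 (M2*M3) * (t + t⁻¹ + 1)) := this
          _ = (t ^ b + t ^ (a*R+b)) * (t + t⁻¹ + 1) * (M1 * M2 * max 1 (M2*M3)) := by ring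
      have := (mul_le_mul_of_nonneg_left (step1.trans step2) (Real.exp_pos (-(s*t))).le)
      calc Real.exp (-(s*t)) * (|F u| * t ^ (a*u+b) * Γv⁻¹ * |Real.log t - Dv / Γv|)
          ≤ Real.exp (-(s*t)) * ((t ^ b + t ^ (a*R+b)) * (t + t⁻¹ + 1) * C) := this
        _ = B t * C := by simp only [hBdef]; ring
    · have : F u = 0 := hFzero u huR
      have hH0 : H t u = 0 := by simp [hHdef, this]
      change ‖H t u‖ ≤ _
      rw [hH0, Set.indicator_of_notMem (by simp [Set.mem_Icc]; intro h; linarith)]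
      simp [hBpos]
  -- Fubini and conclusion
  have swap := integral_integral_swap hHint
  have lhs1 : ∫ t in Set.Ioi (0:ℝ), Real.exp (-s * t) *
        (∫ u in Set.Ioi (0:ℝ), F u * t ^ (a * u + b) / Real.Gamma (a * u + b + 1) *
          (Real.log t - deriv Real.Gamma (a * u + b + 1) / Real.Gamma (a * u + b + 1)))
      = ∫ t in Set.Ioi (0:ℝ), ∫ u in Set.Ioi (0:ℝ), H t u := by
    refine setIntegral_congr_fun measurableSet_Ioi fun t ht => ?_
    rw [neg_mul, ← integral_const_mul]
  rw [lhs1, swap]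
  have inner : ∀ u ∈ Set.Ioi (0:ℝ), (∫ t in Set.Ioi (0:ℝ), H t u)
      = F u * (-Real.log s * (1/s) ^ (a*u+b+1)) := by
    intro u hu
    have hu0 : (0:ℝ) < u := hu
    have hc : 0 < a * u + b := by nlinarith
    have : ∀ t : ℝ, H t u = F u * (Real.exp (-(s*t)) *
        (t ^ (a*u+b) / Real.Gamma ((a*u+b)+1) *
          (Real.log t - deriv Real.Gamma ((a*u+b)+1) / Real.Gamma ((a*u+b)+1)))) := by
      intro t
      simp only [hHdef]
      ring_nf
    rw [show (fun t => H t u) = fun t => F u * (Real.exp (-(s*t)) *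
        (t ^ (a*u+b) / Real.Gamma ((a*u+b)+1) *
          (Real.log t - deriv Real.Gamma ((a*u+b)+1) / Real.Gamma ((a*u+b)+1)))) from funext this]
    rw [integral_const_mul, inner_val hs hc]
    try norm_num [add_assoc]
  rw [setIntegral_congr_fun measurableSet_Ioi inner]
  have final : ∀ u ∈ Set.Ioi (0:ℝ), F u * (-Real.log s * (1/s) ^ (a*u+b+1))
      = (-Real.log s * (1/s) ^ (b+1)) * (Real.exp (-(a * Real.log s) * u) * F u) := by
    intro u hu
    have h1 : (1/s) ^ (a*u+b+1) = (1/s) ^ (a*u) * (1/s) ^ (b+1) := by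
      rw [← Real.rpow_add (by positivity)]
      ring_nf
    have h2 : (1/s : ℝ) ^ (a*u) = Real.exp (-(a * Real.log s) * u) := by
      rw [Real.rpow_def_of_pos (by positivity), one_div, Real.log_inv]
      ring_nf
    rw [h1, h2]
    ring
  rw [setIntegral_congr_fun measurableSet_Ioi final, integral_const_mul]
  rw [show ((1:ℝ)/s) ^ (b+1) = (s ^ (b+1))⁻¹ by rw [one_div, Real.inv_rpow hs0.le]]
  have hspow : (0:ℝ) < s ^ (b+1) := Real.rpow_pos_of_pos hs0 _
  field_simp
  try ring
end
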